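/- For a DMZIC with weak interference, define the region C as the union, over all joint distributions of the form p(q)p(x1|q)p(u2|q)p(x2|u2,q) (with Q and U2 finite-valued auxiliary random variables) with (Y1,Y2) the channel output, of the set of nonnegative pairs (R1,R2) satisfying R1 <= I(X1;Y1|U2,Q), R2 <= I(X2;Y2|Q), and R1+R2 <= I(U2,X1;Y1|Q) + I(X2;Y2|U2,Q). Define the region E as the union over the same class of distributions of the set of nonnegative pairs (R1,R2) satisfying R1 <= I(X1;Y1|U2,Q) and R2 <= I(U2;Y1|Q) + I(X2;Y2|U2,Q). Then C = E. -/
import Mathlib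
set_option linter.unusedSectionVars false
set_option synthInstance.maxSize 1024
set_option maxHeartbeats 1000000


open scoped BigOperators

noncomputable section

namespace IT

/-- A probability mass function on a finite type. -/
def IsPMF {α : Type*} [Fintype α] (p : α → ℝ) : Prop :=
  (∀ a, 0 ≤ p a) ∧ ∑ a, p a = 1

/-- The distribution (pushforward) of a random variable `X` under the pmf `μ`
on the sample space `Ω`. -/
def distOf {Ω α : Type*} [Fintype Ω] [DecidableEq α] (μ : Ω → ℝ) (X : Ω → α) : α → ℝ :=
  fun a => ∑ ω, if X ω = a then μ ω else 0

/-- Shannon entropy (base-2 logarithms) of a pmf on a finite type.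
(Recall `Real.logb 2 0 = 0`, so the `0 log 0 = 0` convention is automatic.) -/
def ent {α : Type*} [Fintype α] (p : α → ℝ) : ℝ := -∑ a, p a * Real.logb 2 (p a)

/-- Entropy `H(X)` of a finite-valued random variable `X` on `(Ω, μ)`. -/
def H {Ω α : Type*} [Fintype Ω] [Fintype α] [DecidableEq α] (μ : Ω → ℝ) (X : Ω → α) : ℝ :=
  ent (distOf μ X)

/-- Mutual information `I(X;Y)`. -/
def MI {Ω α β : Type*} [Fintype Ω] [Fintype α] [DecidableEq α] [Fintype β] [DecidableEq β]
    (μ : Ω → ℝ) (X : Ω → α) (Y : Ω → β) : ℝ :=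
  H μ X + H μ Y - H μ (fun ω => (X ω, Y ω))

/-- Conditional mutual information `I(X;Y|Z)`. -/
def CMI {Ω α β γ : Type*} [Fintype Ω] [Fintype α] [DecidableEq α] [Fintype β] [DecidableEq β]
    [Fintype γ] [DecidableEq γ] (μ : Ω → ℝ) (X : Ω → α) (Y : Ω → β) (Z : Ω → γ) : ℝ :=
  H μ (fun ω => (X ω, Z ω)) + H μ (fun ω => (Y ω, Z ω))
    - H μ (fun ω => (X ω, Y ω, Z ω)) - H μ Z

/-- `B` is conditionally independent of `A` given `C` (a Markov chain `A - C - B`). -/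
def CondIndep {Ω α β γ : Type*} [Fintype Ω] [DecidableEq α] [DecidableEq β] [DecidableEq γ]
    (μ : Ω → ℝ) (A : Ω → α) (B : Ω → β) (C : Ω → γ) : Prop :=
  ∀ a b c,
    distOf μ (fun ω => (A ω, B ω, C ω)) (a, b, c) * distOf μ C c =
      distOf μ (fun ω => (A ω, C ω)) (a, c) * distOf μ (fun ω => (B ω, C ω)) (b, c)

variable {A1 A2 B1 B2 : Type*}

/-- A discrete memoryless interference channel with input alphabets `A1, A2` and
output alphabets `B1, B2`: every pair of inputs yields a pmf on output pairs. -/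
def IsChannel [Fintype B1] [Fintype B2] (W : A1 → A2 → B1 × B2 → ℝ) : Prop :=
  ∀ x1 x2, IsPMF (W x1 x2)

/-- DMZIC with weak interference: the transition probability factorizes as
`p(y1,y2|x1,x2) = p(y2|x2) q(y1|x1,y2)`, i.e. one-sided interference together with
the Markov chain `X2 - (X1,Y2) - Y1`. -/
def WeakZ [Fintype B1] [Fintype B2] (W : A1 → A2 → B1 × B2 → ℝ) : Prop :=
  ∃ (p2 : A2 → B2 → ℝ) (q : A1 → B2 → B1 → ℝ),
    (∀ x2, IsPMF (p2 x2)) ∧ (∀ x1 y2, IsPMF (q x1 y2)) ∧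
      ∀ x1 x2 y1 y2, W x1 x2 (y1, y2) = p2 x2 y2 * q x1 y2 y1

/-- Factorization `p(y1,y2|x1,x2) = p(y2|x1,x2) q(y1|x1,y2)`, i.e. the Markov chain
`X2 - (X1,Y2) - Y1`. -/
def ChainX2X1Y2Y1 [Fintype B1] [Fintype B2] (W : A1 → A2 → B1 × B2 → ℝ) : Prop :=
  ∃ (pa : A1 → A2 → B2 → ℝ) (q : A1 → B2 → B1 → ℝ),
    (∀ x1 x2, IsPMF (pa x1 x2)) ∧ (∀ x1 y2, IsPMF (q x1 y2)) ∧
      ∀ x1 x2 y1 y2, W x1 x2 (y1, y2) = pa x1 x2 y2 * q x1 y2 y1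

/-- The `n`-fold memoryless extension of the channel `W`. -/
def nFold (W : A1 → A2 → B1 × B2 → ℝ) (n : ℕ) (a : Fin n → A1) (b : Fin n → A2)
    (y : (Fin n → B1) × (Fin n → B2)) : ℝ :=
  ∏ i, W (a i) (b i) (y.1 i, y.2 i)

/-- An `(n, M1, M2)` code for the interference channel. -/
structure Code (A1 A2 B1 B2 : Type*) (n M1 M2 : ℕ) where
  enc1 : Fin M1 → Fin n → A1
  enc2 : Fin M2 → Fin n → A2
  dec1 : (Fin n → B1) → Fin M1
  dec2 : (Fin n → B2) → Fin M2

/-- Average probability of error at receiver 1 (messages uniform and independent). -/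
def err1 [Fintype B1] [Fintype B2] (W : A1 → A2 → B1 × B2 → ℝ) {n M1 M2 : ℕ}
    (c : Code A1 A2 B1 B2 n M1 M2) : ℝ :=
  ((M1 : ℝ) * (M2 : ℝ))⁻¹ *
    ∑ w1 : Fin M1, ∑ w2 : Fin M2, ∑ y : (Fin n → B1) × (Fin n → B2),
      if c.dec1 y.1 ≠ w1 then nFold W n (c.enc1 w1) (c.enc2 w2) y else 0

/-- Average probability of error at receiver 2 (messages uniform and independent). -/
def err2 [Fintype B1] [Fintype B2] (W : A1 → A2 → B1 × B2 → ℝ) {n M1 M2 : ℕ}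
    (c : Code A1 A2 B1 B2 n M1 M2) : ℝ :=
  ((M1 : ℝ) * (M2 : ℝ))⁻¹ *
    ∑ w1 : Fin M1, ∑ w2 : Fin M2, ∑ y : (Fin n → B1) × (Fin n → B2),
      if c.dec2 y.2 ≠ w2 then nFold W n (c.enc1 w1) (c.enc2 w2) y else 0

/-- A (nonnegative) rate pair `(R1, R2)` is achievable if there are codes of blocklength `n`,
with at least `2 ^ (n R1)` and `2 ^ (n R2)` messages, whose average error probabilities at
the two receivers can be made arbitrarily small. -/
def Achievable [Fintype B1] [Fintype B2] (W : A1 → A2 → B1 × B2 → ℝ) (R1 R2 : ℝ) : Prop :=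
  0 ≤ R1 ∧ 0 ≤ R2 ∧ ∀ ε : ℝ, 0 < ε →
    ∃ (n M1 M2 : ℕ) (c : Code A1 A2 B1 B2 n M1 M2), 0 < n ∧
      (2 : ℝ) ^ ((n : ℝ) * R1) ≤ (M1 : ℝ) ∧ (2 : ℝ) ^ ((n : ℝ) * R2) ≤ (M2 : ℝ) ∧
      err1 W c ≤ ε ∧ err2 W c ≤ ε

/-- The sum-rate capacity: the supremum of `R1 + R2` over achievable rate pairs. -/
def sumCapacity [Fintype B1] [Fintype B2] (W : A1 → A2 → B1 × B2 → ℝ) : ℝ :=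
  sSup {r : ℝ | ∃ R1 R2 : ℝ, Achievable W R1 R2 ∧ r = R1 + R2}

/-- The capacity region: the closure of the set of achievable rate pairs. -/
def capacityRegion [Fintype B1] [Fintype B2] (W : A1 → A2 → B1 × B2 → ℝ) : Set (ℝ × ℝ) :=
  closure {p : ℝ × ℝ | Achievable W p.1 p.2}

/-- The joint pmf of `(X1, X2, Y1, Y2)` when the product input `p1 × p2` is fed to `W`. -/
def jointOf (W : A1 → A2 → B1 × B2 → ℝ) (p1 : A1 → ℝ) (p2 : A2 → ℝ) :
    A1 × A2 × B1 × B2 → ℝ :=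
  fun z => p1 z.1 * p2 z.2.1 * W z.1 z.2.1 (z.2.2.1, z.2.2.2)

/-- Coordinate projections on `A1 × A2 × B1 × B2`. -/
def pX1 : A1 × A2 × B1 × B2 → A1 := fun z => z.1
def pX2 : A1 × A2 × B1 × B2 → A2 := fun z => z.2.1
def pY1 : A1 × A2 × B1 × B2 → B1 := fun z => z.2.2.1
def pY2 : A1 × A2 × B1 × B2 → B2 := fun z => z.2.2.2

/-- The binary entropy function (base-2 logarithms). -/
def h2 (t : ℝ) : ℝ := -(t * Real.logb 2 t) - (1 - t) * Real.logb 2 (1 - t)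

end IT

namespace IT

/-- Joint pmf of `(Q, U2, X1, X2, Y1, Y2)` for input factorization
`p(q) p(x1|q) p(u2|q) p(x2|u2,q)` fed to the channel `W`. -/
def mu4 {A1 A2 B1 B2 Q U2 : Type} (W : A1 → A2 → B1 × B2 → ℝ)
    (pQ : Q → ℝ) (pX1c : Q → A1 → ℝ) (pU2c : Q → U2 → ℝ) (pX2c : Q → U2 → A2 → ℝ) :
    Q × U2 × A1 × A2 × B1 × B2 → ℝ :=
  fun z => pQ z.1 * pX1c z.1 z.2.2.1 * pU2c z.1 z.2.1 * pX2c z.1 z.2.1 z.2.2.2.1 *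
    W z.2.2.1 z.2.2.2.1 (z.2.2.2.2.1, z.2.2.2.2.2)

/-- The region `C` (Han–Kobayashi-type achievable region for the DMZIC). -/
def regionC {A1 A2 B1 B2 : Type} [Fintype A1] [DecidableEq A1] [Fintype A2] [DecidableEq A2]
    [Fintype B1] [DecidableEq B1] [Fintype B2] [DecidableEq B2] (W : A1 → A2 → B1 × B2 → ℝ) : Set (ℝ × ℝ) :=
  {r | ∃ (Q U2 : Type) (_ : Fintype Q) (_ : DecidableEq Q) (_ : Fintype U2)
      (_ : DecidableEq U2) (pQ : Q → ℝ) (pX1c : Q → A1 → ℝ) (pU2c : Q → U2 → ℝ)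
      (pX2c : Q → U2 → A2 → ℝ),
      IsPMF pQ ∧ (∀ q, IsPMF (pX1c q)) ∧ (∀ q, IsPMF (pU2c q)) ∧
        (∀ q u, IsPMF (pX2c q u)) ∧
      0 ≤ r.1 ∧ 0 ≤ r.2 ∧
      r.1 ≤ CMI (mu4 W pQ pX1c pU2c pX2c)
              (fun z => z.2.2.1) (fun z => z.2.2.2.2.1) (fun z => (z.2.1, z.1)) ∧
      r.2 ≤ CMI (mu4 W pQ pX1c pU2c pX2c)
              (fun z => z.2.2.2.1) (fun z => z.2.2.2.2.2) (fun z => z.1) ∧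
      r.1 + r.2 ≤
        CMI (mu4 W pQ pX1c pU2c pX2c)
            (fun z => (z.2.1, z.2.2.1)) (fun z => z.2.2.2.2.1) (fun z => z.1)
          + CMI (mu4 W pQ pX1c pU2c pX2c)
              (fun z => z.2.2.2.1) (fun z => z.2.2.2.2.2) (fun z => (z.2.1, z.1))}

/-- The region `E` (simpler description). -/
def regionE {A1 A2 B1 B2 : Type} [Fintype A1] [DecidableEq A1] [Fintype A2] [DecidableEq A2]
    [Fintype B1] [DecidableEq B1] [Fintype B2] [DecidableEq B2] (W : A1 → A2 → B1 × B2 → ℝ) : Set (ℝ × ℝ) :=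
  {r | ∃ (Q U2 : Type) (_ : Fintype Q) (_ : DecidableEq Q) (_ : Fintype U2)
      (_ : DecidableEq U2) (pQ : Q → ℝ) (pX1c : Q → A1 → ℝ) (pU2c : Q → U2 → ℝ)
      (pX2c : Q → U2 → A2 → ℝ),
      IsPMF pQ ∧ (∀ q, IsPMF (pX1c q)) ∧ (∀ q, IsPMF (pU2c q)) ∧
        (∀ q u, IsPMF (pX2c q u)) ∧
      0 ≤ r.1 ∧ 0 ≤ r.2 ∧
      r.1 ≤ CMI (mu4 W pQ pX1c pU2c pX2c)
              (fun z => z.2.2.1) (fun z => z.2.2.2.2.1) (fun z => (z.2.1, z.1)) ∧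
      r.2 ≤ CMI (mu4 W pQ pX1c pU2c pX2c)
              (fun z => z.2.1) (fun z => z.2.2.2.2.1) (fun z => z.1)
          + CMI (mu4 W pQ pX1c pU2c pX2c)
              (fun z => z.2.2.2.1) (fun z => z.2.2.2.2.2) (fun z => (z.2.1, z.1))}

section Base
variable {Ω α β γ : Type*} [Fintype Ω] [Fintype α] [DecidableEq α] [Fintype β] [DecidableEq β]
  [Fintype γ] [DecidableEq γ]

lemma distOf_nonneg (μ : Ω → ℝ) (hμ : ∀ ω, 0 ≤ μ ω) (X : Ω → α) (a : α) :
    0 ≤ distOf μ X a := by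
  refine Finset.sum_nonneg fun ω _ => ?_
  split
  · exact hμ ω
  · exact le_refl 0

lemma sum_omega_eq (μ : Ω → ℝ) (X : Ω → α) (h : α → ℝ) :
    ∑ ω, μ ω * h (X ω) = ∑ a, distOf μ X a * h a := by
  simp only [distOf, Finset.sum_mul]
  rw [Finset.sum_comm]
  refine Finset.sum_congr rfl fun ω _ => ?_
  rw [Finset.sum_eq_single (X ω)]
  · rw [if_pos rfl]
  · intro b _ hb
    rw [if_neg (fun (h' : X ω = b) => hb h'.symm), zero_mul]
  · simp

lemma sum_distOf (μ : Ω → ℝ) (X : Ω → α) : ∑ a, distOf μ X a = ∑ ω, μ ω := by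
  have := sum_omega_eq μ X (fun _ => 1)
  simpa using this.symm

lemma H_eq_sum (μ : Ω → ℝ) (X : Ω → α) :
    H μ X = -∑ ω, μ ω * Real.logb 2 (distOf μ X (X ω)) := by
  rw [H, ent, sum_omega_eq μ X (fun a => Real.logb 2 (distOf μ X a))]

lemma distOf_congr_point (μ : Ω → ℝ) (X : Ω → α) (Y : Ω → β)
    (h : ∀ ω ω', X ω = X ω' ↔ Y ω = Y ω') (ω : Ω) :
    distOf μ X (X ω) = distOf μ Y (Y ω) := by
  unfold distOf
  refine Finset.sum_congr rfl fun ω' _ => ?_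
  have := h ω' ω
  by_cases hx : X ω' = X ω
  · rw [if_pos hx, if_pos (this.mp hx)]
  · rw [if_neg hx, if_neg (fun hy => hx (this.mpr hy))]

lemma H_congr (μ : Ω → ℝ) (X : Ω → α) (Y : Ω → β)
    (h : ∀ ω ω', X ω = X ω' ↔ Y ω = Y ω') : H μ X = H μ Y := by
  rw [H_eq_sum, H_eq_sum]
  congr 1
  refine Finset.sum_congr rfl fun ω _ => ?_
  rw [distOf_congr_point μ X Y h ω]


lemma distOf_pair_fst (μ : Ω → ℝ) (X : Ω → α) (Y : Ω → β) (Z : Ω → γ) (a : α) (c : γ) :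
    distOf μ (fun ω => (X ω, Z ω)) (a, c)
      = ∑ b, distOf μ (fun ω => (X ω, Y ω, Z ω)) (a, b, c) := by
  unfold distOf
  rw [Finset.sum_comm]
  refine Finset.sum_congr rfl fun ω _ => ?_
  by_cases h1 : X ω = a <;> by_cases h2 : Z ω = c <;>
    simp [Prod.ext_iff, h1, h2]

lemma distOf_pair_snd (μ : Ω → ℝ) (X : Ω → α) (Y : Ω → β) (Z : Ω → γ) (b : β) (c : γ) :
    distOf μ (fun ω => (Y ω, Z ω)) (b, c)
      = ∑ a, distOf μ (fun ω => (X ω, Y ω, Z ω)) (a, b, c) := by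
  unfold distOf
  rw [Finset.sum_comm]
  refine Finset.sum_congr rfl fun ω _ => ?_
  by_cases h1 : Y ω = b <;> by_cases h2 : Z ω = c <;>
    simp [Prod.ext_iff, h1, h2]

lemma distOf_snd_of_pair (μ : Ω → ℝ) (X : Ω → α) (Z : Ω → γ) (c : γ) :
    distOf μ Z c = ∑ a, distOf μ (fun ω => (X ω, Z ω)) (a, c) := by
  unfold distOf
  rw [Finset.sum_comm]
  refine Finset.sum_congr rfl fun ω _ => ?_
  by_cases h2 : Z ω = c <;> simp [Prod.ext_iff, h2]

lemma distOf_third (μ : Ω → ℝ) (X : Ω → α) (Y : Ω → β) (Z : Ω → γ) (c : γ) :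
    distOf μ Z c = ∑ a, ∑ b, distOf μ (fun ω => (X ω, Y ω, Z ω)) (a, b, c) := by
  rw [distOf_snd_of_pair μ X Z c]
  exact Finset.sum_congr rfl fun a _ => distOf_pair_fst μ X Y Z a c

/-- CMI as a sum over the joint distribution of `(X,Y,Z)`. -/
lemma CMI_repr (μ : Ω → ℝ) (X : Ω → α) (Y : Ω → β) (Z : Ω → γ) :
    CMI μ X Y Z = ∑ t : α × β × γ,
      distOf μ (fun ω => (X ω, Y ω, Z ω)) t *
        (Real.logb 2 (distOf μ (fun ω => (X ω, Y ω, Z ω)) t)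
          + Real.logb 2 (distOf μ Z t.2.2)
          - Real.logb 2 (distOf μ (fun ω => (X ω, Z ω)) (t.1, t.2.2))
          - Real.logb 2 (distOf μ (fun ω => (Y ω, Z ω)) (t.2.1, t.2.2))) := by
  have h1 : H μ (fun ω => (X ω, Z ω)) = -∑ ω, μ ω *
      Real.logb 2 (distOf μ (fun ω => (X ω, Z ω)) (X ω, Z ω)) := H_eq_sum ..
  have h2 : H μ (fun ω => (Y ω, Z ω)) = -∑ ω, μ ω *
      Real.logb 2 (distOf μ (fun ω => (Y ω, Z ω)) (Y ω, Z ω)) := H_eq_sum ..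
  have h3 : H μ (fun ω => (X ω, Y ω, Z ω)) = -∑ ω, μ ω *
      Real.logb 2 (distOf μ (fun ω => (X ω, Y ω, Z ω)) (X ω, Y ω, Z ω)) := H_eq_sum ..
  have h4 : H μ Z = -∑ ω, μ ω * Real.logb 2 (distOf μ Z (Z ω)) := H_eq_sum ..
  have key : ∀ g : α × β × γ → ℝ, ∑ ω, μ ω * g (X ω, Y ω, Z ω)
      = ∑ t : α × β × γ, distOf μ (fun ω => (X ω, Y ω, Z ω)) t * g t :=
    fun g => sum_omega_eq μ (fun ω => (X ω, Y ω, Z ω)) g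
  rw [CMI, h1, h2, h3, h4,
    key (fun t => Real.logb 2 (distOf μ (fun ω => (X ω, Z ω)) (t.1, t.2.2))),
    key (fun t => Real.logb 2 (distOf μ (fun ω => (Y ω, Z ω)) (t.2.1, t.2.2))),
    key (fun t => Real.logb 2 (distOf μ (fun ω => (X ω, Y ω, Z ω)) t)),
    key (fun t => Real.logb 2 (distOf μ Z t.2.2))]
  set p := distOf μ (fun ω => (X ω, Y ω, Z ω)) with hp
  have comb : ∑ t : α × β × γ, p t *
      (Real.logb 2 (p t) + Real.logb 2 (distOf μ Z t.2.2)
        - Real.logb 2 (distOf μ (fun ω => (X ω, Z ω)) (t.1, t.2.2))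
        - Real.logb 2 (distOf μ (fun ω => (Y ω, Z ω)) (t.2.1, t.2.2)))
      = (∑ t : α × β × γ, p t * Real.logb 2 (p t))
        + (∑ t : α × β × γ, p t * Real.logb 2 (distOf μ Z t.2.2))
        - (∑ t : α × β × γ, p t * Real.logb 2 (distOf μ (fun ω => (X ω, Z ω)) (t.1, t.2.2)))
        - (∑ t : α × β × γ, p t * Real.logb 2 (distOf μ (fun ω => (Y ω, Z ω)) (t.2.1, t.2.2))) := by
    rw [← Finset.sum_add_distrib, ← Finset.sum_sub_distrib, ← Finset.sum_sub_distrib]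
    exact Finset.sum_congr rfl fun t _ => by ring
  rw [comb]
  ring


lemma CMI_nonneg (μ : Ω → ℝ) (hμ : ∀ ω, 0 ≤ μ ω) (X : Ω → α) (Y : Ω → β) (Z : Ω → γ) :
    0 ≤ CMI μ X Y Z := by
  classical
  set p := distOf μ (fun ω => (X ω, Y ω, Z ω)) with hp
  have hpn : ∀ t, 0 ≤ p t := fun t => distOf_nonneg μ hμ _ t
  set q : α × β × γ → ℝ := fun t =>
    if distOf μ Z t.2.2 = 0 then 0
    else distOf μ (fun ω => (X ω, Z ω)) (t.1, t.2.2)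
      * distOf μ (fun ω => (Y ω, Z ω)) (t.2.1, t.2.2) / distOf μ Z t.2.2 with hq
  have hqn : ∀ t, 0 ≤ q t := by
    intro t
    rw [hq]
    dsimp only
    split
    · exact le_refl 0
    · exact div_nonneg (mul_nonneg (distOf_nonneg μ hμ _ _) (distOf_nonneg μ hμ _ _))
        (distOf_nonneg μ hμ _ _)
  have key : ∀ t : α × β × γ,
      (p t - q t) / Real.log 2 ≤ p t *
        (Real.logb 2 (p t) + Real.logb 2 (distOf μ Z t.2.2)
          - Real.logb 2 (distOf μ (fun ω => (X ω, Z ω)) (t.1, t.2.2))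
          - Real.logb 2 (distOf μ (fun ω => (Y ω, Z ω)) (t.2.1, t.2.2))) := by
    rintro ⟨a, b, c⟩
    by_cases hp0 : p (a, b, c) = 0
    · rw [hp0]
      simp only [zero_mul, zero_sub]
      apply div_nonpos_of_nonpos_of_nonneg
      · simp [hqn (a, b, c)]
      · exact Real.log_nonneg one_le_two
    · have hppos : 0 < p (a, b, c) := lt_of_le_of_ne (hpn _) (Ne.symm hp0)
      have hm1 : p (a, b, c) ≤ distOf μ (fun ω => (X ω, Z ω)) (a, c) := by
        rw [distOf_pair_fst μ X Y Z a c]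
        exact Finset.single_le_sum (f := fun b' => p (a, b', c))
          (fun b' _ => hpn _) (Finset.mem_univ b)
      have hm2 : p (a, b, c) ≤ distOf μ (fun ω => (Y ω, Z ω)) (b, c) := by
        rw [distOf_pair_snd μ X Y Z b c]
        exact Finset.single_le_sum (f := fun a' => p (a', b, c))
          (fun a' _ => hpn _) (Finset.mem_univ a)
      have hm3 : p (a, b, c) ≤ distOf μ Z c := by
        rw [distOf_third μ X Y Z c]
        calc p (a, b, c) ≤ ∑ b', p (a, b', c) :=
              Finset.single_le_sum (f := fun b' => p (a, b', c))
                (fun b' _ => hpn _) (Finset.mem_univ b)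
          _ ≤ ∑ a', ∑ b', p (a', b', c) :=
              Finset.single_le_sum (f := fun a' => ∑ b', p (a', b', c))
                (fun a' _ => Finset.sum_nonneg fun b' _ => hpn _) (Finset.mem_univ a)
      have h1 : 0 < distOf μ (fun ω => (X ω, Z ω)) (a, c) := lt_of_lt_of_le hppos hm1
      have h2 : 0 < distOf μ (fun ω => (Y ω, Z ω)) (b, c) := lt_of_lt_of_le hppos hm2
      have h3 : 0 < distOf μ Z c := lt_of_lt_of_le hppos hm3
      have hqval : q (a, b, c) = distOf μ (fun ω => (X ω, Z ω)) (a, c)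
          * distOf μ (fun ω => (Y ω, Z ω)) (b, c) / distOf μ Z c := by
        rw [hq]; dsimp only; rw [if_neg (ne_of_gt h3)]
      have hqpos : 0 < q (a, b, c) := by
        rw [hqval]; positivity
      have hlog : Real.log (q (a, b, c) / p (a, b, c)) ≤ q (a, b, c) / p (a, b, c) - 1 :=
        Real.log_le_sub_one_of_pos (div_pos hqpos hppos)
      have hexpand : Real.log (q (a, b, c) / p (a, b, c))
          = Real.log (distOf μ (fun ω => (X ω, Z ω)) (a, c))
            + Real.log (distOf μ (fun ω => (Y ω, Z ω)) (b, c))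
            - Real.log (distOf μ Z c) - Real.log (p (a, b, c)) := by
        rw [Real.log_div (ne_of_gt hqpos) (ne_of_gt hppos), hqval,
          Real.log_div (by positivity) (ne_of_gt h3),
          Real.log_mul (ne_of_gt h1) (ne_of_gt h2)]
      have hlog2 : (0:ℝ) < Real.log 2 := Real.log_pos one_lt_two
      have hsum : Real.logb 2 (p (a, b, c)) + Real.logb 2 (distOf μ Z c)
          - Real.logb 2 (distOf μ (fun ω => (X ω, Z ω)) (a, c))
          - Real.logb 2 (distOf μ (fun ω => (Y ω, Z ω)) (b, c))
          = -(Real.log (q (a, b, c) / p (a, b, c))) / Real.log 2 := by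
        simp only [Real.logb]
        rw [hexpand]
        ring
      rw [hsum, ← mul_div_assoc]
      have hc : q (a, b, c) / p (a, b, c) * p (a, b, c) = q (a, b, c) :=
        div_mul_cancel₀ _ (ne_of_gt hppos)
      have hle : p (a, b, c) - q (a, b, c) ≤ p (a, b, c) * -(Real.log (q (a, b, c) / p (a, b, c))) := by
        have h := mul_le_mul_of_nonneg_left hlog (le_of_lt hppos)
        nlinarith [h, hc]
      exact div_le_div_of_nonneg_right hle hlog2.le
  have hlog2 : (0:ℝ) < Real.log 2 := Real.log_pos one_lt_two
  have hq_le : ∑ t : α × β × γ, q t ≤ ∑ t : α × β × γ, p t := by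
    have e1 : ∑ t : α × β × γ, q t
        = ∑ c, ∑ a, ∑ b, q (a, b, c) := by
      rw [Fintype.sum_prod_type]
      simp only [Fintype.sum_prod_type]
      have h1 : ∀ a : α, ∑ b, ∑ c, q (a, b, c) = ∑ c, ∑ b, q (a, b, c) :=
        fun a => Finset.sum_comm
      simp_rw [h1]
      exact Finset.sum_comm
    have e2 : ∀ c, ∑ a, ∑ b, q (a, b, c)
        = (if distOf μ Z c = 0 then 0 else distOf μ Z c) := by
      intro c
      by_cases h : distOf μ Z c = 0
      · simp only [hq, h, if_pos rfl]
        simp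
      · rw [if_neg h]
        have : ∑ a, ∑ b, q (a, b, c)
            = (∑ a, distOf μ (fun ω => (X ω, Z ω)) (a, c))
              * (∑ b, distOf μ (fun ω => (Y ω, Z ω)) (b, c)) / distOf μ Z c := by
          rw [Finset.sum_mul, Finset.sum_div]
          refine Finset.sum_congr rfl fun a _ => ?_
          rw [Finset.mul_sum, Finset.sum_div]
          refine Finset.sum_congr rfl fun b _ => ?_
          simp only [hq]
          rw [if_neg h]
        rw [this, ← distOf_snd_of_pair μ X Z c, ← distOf_snd_of_pair μ Y Z c,
          mul_div_assoc, div_self h, mul_one]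
    rw [e1]
    calc ∑ c, ∑ a, ∑ b, q (a, b, c)
        = ∑ c, (if distOf μ Z c = 0 then 0 else distOf μ Z c) :=
          Finset.sum_congr rfl fun c _ => e2 c
      _ ≤ ∑ c, distOf μ Z c := by
          refine Finset.sum_le_sum fun c _ => ?_
          split
          · exact distOf_nonneg μ hμ _ _
          · exact le_refl _
      _ = ∑ ω, μ ω := sum_distOf μ Z
      _ = ∑ t : α × β × γ, p t := (sum_distOf μ _).symm
  calc (0:ℝ) ≤ (∑ t : α × β × γ, p t - ∑ t : α × β × γ, q t) / Real.log 2 :=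
        div_nonneg (by linarith) hlog2.le
    _ = ∑ t : α × β × γ, (p t - q t) / Real.log 2 := by
        rw [← Finset.sum_sub_distrib, Finset.sum_div]
    _ ≤ ∑ t, p t *
        (Real.logb 2 (p t) + Real.logb 2 (distOf μ Z t.2.2)
          - Real.logb 2 (distOf μ (fun ω => (X ω, Z ω)) (t.1, t.2.2))
          - Real.logb 2 (distOf μ (fun ω => (Y ω, Z ω)) (t.2.1, t.2.2))) :=
        Finset.sum_le_sum fun t _ => key t
    _ = CMI μ X Y Z := (CMI_repr μ X Y Z).symm


/-- If the joint of `(X,Y,Z)` factorizes as `f a c * g b c` (with `f, g ≥ 0`),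
then `I(X;Y|Z) = 0`. -/
lemma CMI_eq_zero_of_factor (μ : Ω → ℝ) (hμ : ∀ ω, 0 ≤ μ ω) (X : Ω → α) (Y : Ω → β) (Z : Ω → γ)
    (f : α → γ → ℝ) (g : β → γ → ℝ) (hf : ∀ a c, 0 ≤ f a c) (hg : ∀ b c, 0 ≤ g b c)
    (hfac : ∀ a b c, distOf μ (fun ω => (X ω, Y ω, Z ω)) (a, b, c) = f a c * g b c) :
    CMI μ X Y Z = 0 := by
  classical
  rw [CMI_repr]
  refine Finset.sum_eq_zero fun t _ => ?_
  obtain ⟨a, b, c⟩ := t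
  set p := distOf μ (fun ω => (X ω, Y ω, Z ω)) with hp
  by_cases hp0 : p (a, b, c) = 0
  · rw [hp0, zero_mul]
  · have hppos : 0 < p (a, b, c) := lt_of_le_of_ne (distOf_nonneg μ hμ _ _) (Ne.symm hp0)
    have hfg : p (a, b, c) = f a c * g b c := hfac a b c
    have hfpos : 0 < f a c := by
      rcases lt_or_eq_of_le (hf a c) with h | h
      · exact h
      · exfalso; rw [hfg, ← h, zero_mul] at hppos; exact lt_irrefl 0 hppos
    have hgpos : 0 < g b c := by
      rcases lt_or_eq_of_le (hg b c) with h | h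
      · exact h
      · exfalso; rw [hfg, ← h, mul_zero] at hppos; exact lt_irrefl 0 hppos
    have hG : ∀ b', 0 ≤ g b' c := fun b' => hg b' c
    have hF : ∀ a', 0 ≤ f a' c := fun a' => hf a' c
    have hGpos : 0 < ∑ b', g b' c :=
      lt_of_lt_of_le hgpos (Finset.single_le_sum (fun b' _ => hG b') (Finset.mem_univ b))
    have hFpos : 0 < ∑ a', f a' c :=
      lt_of_lt_of_le hfpos (Finset.single_le_sum (fun a' _ => hF a') (Finset.mem_univ a))
    have hm1 : distOf μ (fun ω => (X ω, Z ω)) (a, c) = f a c * ∑ b', g b' c := by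
      rw [distOf_pair_fst μ X Y Z a c,
        Finset.sum_congr rfl fun b' _ => hfac a b' c, ← Finset.mul_sum]
    have hm2 : distOf μ (fun ω => (Y ω, Z ω)) (b, c) = (∑ a', f a' c) * g b c := by
      rw [distOf_pair_snd μ X Y Z b c,
        Finset.sum_congr rfl fun a' _ => hfac a' b c, ← Finset.sum_mul]
    have hm3 : distOf μ Z c = (∑ a', f a' c) * ∑ b', g b' c := by
      rw [distOf_third μ X Y Z c,
        Finset.sum_congr rfl fun a' _ =>
          (Finset.sum_congr rfl fun b' _ => hfac a' b' c).trans (Finset.mul_sum _ _ _).symm,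
        ← Finset.sum_mul]
    have : Real.logb 2 (p (a, b, c)) + Real.logb 2 (distOf μ Z c)
        - Real.logb 2 (distOf μ (fun ω => (X ω, Z ω)) (a, c))
        - Real.logb 2 (distOf μ (fun ω => (Y ω, Z ω)) (b, c)) = 0 := by
      rw [hfg, hm1, hm2, hm3,
        Real.logb_mul (ne_of_gt hfpos) (ne_of_gt hgpos),
        Real.logb_mul (ne_of_gt hFpos) (ne_of_gt hGpos),
        Real.logb_mul (ne_of_gt hfpos) (ne_of_gt hGpos),
        Real.logb_mul (ne_of_gt hFpos) (ne_of_gt hgpos)]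
      ring
    rw [this, mul_zero]

/-- CMI only depends on the "information content" of the three variables. -/
lemma CMI_congr {α' β' γ' : Type*} [Fintype α'] [DecidableEq α'] [Fintype β'] [DecidableEq β']
    [Fintype γ'] [DecidableEq γ'] (μ : Ω → ℝ) (X : Ω → α) (Y : Ω → β) (Z : Ω → γ)
    (X' : Ω → α') (Y' : Ω → β') (Z' : Ω → γ')
    (hX : ∀ ω ω', X ω = X ω' ↔ X' ω = X' ω')
    (hY : ∀ ω ω', Y ω = Y ω' ↔ Y' ω = Y' ω')
    (hZ : ∀ ω ω', Z ω = Z ω' ↔ Z' ω = Z' ω') :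
    CMI μ X Y Z = CMI μ X' Y' Z' := by
  unfold CMI
  rw [H_congr μ (fun ω => (X ω, Z ω)) (fun ω => (X' ω, Z' ω))
      (fun ω ω' => by have h1 := hX ω ω'; have h3 := hZ ω ω';
                      simp only [Prod.mk.injEq]; tauto),
    H_congr μ (fun ω => (Y ω, Z ω)) (fun ω => (Y' ω, Z' ω))
      (fun ω ω' => by have h2 := hY ω ω'; have h3 := hZ ω ω';
                      simp only [Prod.mk.injEq]; tauto),
    H_congr μ (fun ω => (X ω, Y ω, Z ω)) (fun ω => (X' ω, Y' ω, Z' ω))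
      (fun ω ω' => by have h1 := hX ω ω'; have h2 := hY ω ω'; have h3 := hZ ω ω';
                      simp only [Prod.mk.injEq]; tauto),
    H_congr μ Z Z' hZ]

lemma CMI_comm (μ : Ω → ℝ) (X : Ω → α) (Y : Ω → β) (Z : Ω → γ) :
    CMI μ X Y Z = CMI μ Y X Z := by
  unfold CMI
  rw [H_congr μ (fun ω => (X ω, Y ω, Z ω)) (fun ω => (Y ω, X ω, Z ω))
      (fun ω ω' => by simp only [Prod.mk.injEq]; tauto)]
  ring

/-- Chain rule: `I(U,X;Y|Z) = I(U;Y|Z) + I(X;Y|U,Z)`. -/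
lemma CMI_chain {δ : Type*} [Fintype δ] [DecidableEq δ]
    (μ : Ω → ℝ) (U : Ω → α) (X : Ω → β) (Y : Ω → γ) (Z : Ω → δ) :
    CMI μ (fun ω => (U ω, X ω)) Y Z
      = CMI μ U Y Z + CMI μ X Y (fun ω => (U ω, Z ω)) := by
  unfold CMI
  rw [H_congr μ (fun ω => ((U ω, X ω), Z ω)) (fun ω => (X ω, (U ω, Z ω)))
      (fun ω ω' => by simp only [Prod.mk.injEq]; tauto),
    H_congr μ (fun ω => ((U ω, X ω), Y ω, Z ω)) (fun ω => (X ω, Y ω, (U ω, Z ω)))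
      (fun ω ω' => by simp only [Prod.mk.injEq]; tauto),
    H_congr μ (fun ω => (U ω, Y ω, Z ω)) (fun ω => (Y ω, (U ω, Z ω)))
      (fun ω ω' => by simp only [Prod.mk.injEq]; tauto)]
  ring

/-- `I(c;Y|Z) = 0` for a constant `c`. -/
lemma CMI_const_left (μ : Ω → ℝ) (c : α) (Y : Ω → β) (Z : Ω → γ) :
    CMI μ (fun _ => c) Y Z = 0 := by
  unfold CMI
  rw [H_congr μ (fun ω => ((fun _ => c) ω, Z ω)) Z
      (fun ω ω' => by simp only [Prod.mk.injEq]; tauto),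
    H_congr μ (fun ω => ((fun _ => c) ω, Y ω, Z ω)) (fun ω => (Y ω, Z ω))
      (fun ω ω' => by simp only [Prod.mk.injEq]; tauto)]
  ring


section Push
variable {Ω' : Type*} [Fintype Ω'] [DecidableEq Ω']

lemma distOf_push (μ : Ω → ℝ) (σ : Ω → Ω') (ν : Ω' → ℝ)
    (hν : ∀ ω', ν ω' = ∑ ω, if σ ω = ω' then μ ω else 0) (X : Ω' → α) :
    distOf ν X = distOf μ (fun ω => X (σ ω)) := by
  classical
  funext a
  unfold distOf
  simp_rw [hν]
  have step : (∑ x : Ω', if X x = a then ∑ ω, if σ ω = x then μ ω else 0 else 0)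
      = ∑ x : Ω', ∑ ω, if X x = a then (if σ ω = x then μ ω else 0) else 0 := by
    refine Finset.sum_congr rfl fun x _ => ?_
    split
    · rfl
    · exact Finset.sum_const_zero.symm
  rw [step, Finset.sum_comm]
  refine Finset.sum_congr rfl fun ω _ => ?_
  by_cases h : X (σ ω) = a
  · rw [Finset.sum_eq_single (σ ω)]
    · rw [if_pos h, if_pos rfl, if_pos h]
    · intro b _ hb
      split
      · rw [if_neg (fun h' => hb h'.symm)]
      · rfl
    · simp
  · rw [if_neg h]
    refine Finset.sum_eq_zero fun b _ => ?_
    split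
    · next hXb =>
      split
      · next hσ => exact absurd (hσ ▸ hXb) h
      · rfl
    · rfl

lemma H_push (μ : Ω → ℝ) (σ : Ω → Ω') (ν : Ω' → ℝ)
    (hν : ∀ ω', ν ω' = ∑ ω, if σ ω = ω' then μ ω else 0) (X : Ω' → α) :
    H ν X = H μ (fun ω => X (σ ω)) := by
  unfold H
  rw [distOf_push μ σ ν hν X]

lemma CMI_push (μ : Ω → ℝ) (σ : Ω → Ω') (ν : Ω' → ℝ)
    (hν : ∀ ω', ν ω' = ∑ ω, if σ ω = ω' then μ ω else 0)
    (X : Ω' → α) (Y : Ω' → β) (Z : Ω' → γ) :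
    CMI ν X Y Z = CMI μ (fun ω => X (σ ω)) (fun ω => Y (σ ω)) (fun ω => Z (σ ω)) := by
  unfold CMI
  rw [H_push μ σ ν hν (fun ω' => (X ω', Z ω')), H_push μ σ ν hν (fun ω' => (Y ω', Z ω')),
    H_push μ σ ν hν (fun ω' => (X ω', Y ω', Z ω')), H_push μ σ ν hν Z]

end Push

section Smul

lemma distOf_smul (c : ℝ) (μ : Ω → ℝ) (X : Ω → α) :
    distOf (fun ω => c * μ ω) X = fun a => c * distOf μ X a := by
  funext a
  unfold distOf
  rw [Finset.mul_sum]
  refine Finset.sum_congr rfl fun ω _ => ?_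
  split <;> simp

lemma ent_smul (c : ℝ) (hc : 0 < c) (p : α → ℝ) :
    ent (fun a => c * p a) = c * ent p - (c * Real.logb 2 c) * ∑ a, p a := by
  unfold ent
  dsimp only
  have key : ∀ a, c * p a * Real.logb 2 (c * p a)
      = c * (p a * Real.logb 2 (p a)) + (c * Real.logb 2 c) * p a := by
    intro a
    by_cases h : p a = 0
    · rw [h]; simp
    · rw [Real.logb_mul (ne_of_gt hc) h]; ring
  simp_rw [key]
  rw [Finset.sum_add_distrib, ← Finset.mul_sum, ← Finset.mul_sum]
  ring

lemma H_smul (c : ℝ) (hc : 0 < c) (μ : Ω → ℝ) (X : Ω → α) :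
    H (fun ω => c * μ ω) X = c * H μ X - (c * Real.logb 2 c) * ∑ ω, μ ω := by
  unfold H
  rw [distOf_smul, ent_smul c hc, sum_distOf]

lemma H_zero (T : Ω → α) : H (fun _ : Ω => (0:ℝ)) T = 0 := by
  unfold H ent distOf
  simp

lemma CMI_smul (c : ℝ) (hc : 0 ≤ c) (μ : Ω → ℝ) (X : Ω → α) (Y : Ω → β) (Z : Ω → γ) :
    CMI (fun ω => c * μ ω) X Y Z = c * CMI μ X Y Z := by
  rcases eq_or_lt_of_le hc with h | h
  · have hz : (fun ω => c * μ ω) = (fun _ : Ω => (0:ℝ)) := by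
      funext ω; rw [← h, zero_mul]
    rw [hz, CMI, H_zero, H_zero, H_zero, H_zero, ← h]
    ring
  · unfold CMI
    rw [H_smul c h, H_smul c h, H_smul c h, H_smul c h]
    ring

end Smul

section Add

lemma distOf_add (μ ν : Ω → ℝ) (X : Ω → α) (a : α) :
    distOf (fun ω => μ ω + ν ω) X a = distOf μ X a + distOf ν X a := by
  unfold distOf
  rw [← Finset.sum_add_distrib]
  refine Finset.sum_congr rfl fun ω _ => ?_
  split <;> simp

lemma ent_add_disjoint (p q : α → ℝ) (h : ∀ a, p a = 0 ∨ q a = 0) :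
    ent (fun a => p a + q a) = ent p + ent q := by
  unfold ent
  dsimp only
  rw [← neg_add, ← Finset.sum_add_distrib]
  congr 1
  refine Finset.sum_congr rfl fun a _ => ?_
  rcases h a with h0 | h0 <;> rw [h0] <;> simp

lemma H_add_split {κ : Type*} [Fintype κ] [DecidableEq κ] (μ ν : Ω → ℝ) (T : Ω → Bool)
    (hμ : ∀ ω, T ω = false → μ ω = 0) (hν : ∀ ω, T ω = true → ν ω = 0)
    (V : Ω → κ) (ρ : κ → Bool) (hρ : ∀ ω, ρ (V ω) = T ω) :
    H (fun ω => μ ω + ν ω) V = H μ V + H ν V := by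
  unfold H
  have : distOf (fun ω => μ ω + ν ω) V = fun k => distOf μ V k + distOf ν V k :=
    funext (distOf_add μ ν V)
  rw [this]
  refine ent_add_disjoint _ _ fun k => ?_
  by_cases hk : ρ k = true
  · right
    refine Finset.sum_eq_zero fun ω _ => ?_
    split
    · next he => exact hν ω (by rw [← hρ ω, he, hk])
    · rfl
  · left
    refine Finset.sum_eq_zero fun ω _ => ?_
    split
    · next he =>
      exact hμ ω (by rw [← hρ ω, he]; revert hk; cases ρ k <;> simp)
    · rfl

lemma CMI_add_split (μ ν : Ω → ℝ) (X : Ω → α) (Y : Ω → β) (Z : Ω → γ)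
    (T : Ω → Bool) (τ : γ → Bool) (hτ : ∀ ω, τ (Z ω) = T ω)
    (hμ : ∀ ω, T ω = false → μ ω = 0) (hν : ∀ ω, T ω = true → ν ω = 0) :
    CMI (fun ω => μ ω + ν ω) X Y Z = CMI μ X Y Z + CMI ν X Y Z := by
  classical
  unfold CMI
  rw [H_add_split μ ν T hμ hν (fun ω => (X ω, Z ω)) (fun k => τ k.2) (fun ω => hτ ω),
    H_add_split μ ν T hμ hν (fun ω => (Y ω, Z ω)) (fun k => τ k.2) (fun ω => hτ ω),
    H_add_split μ ν T hμ hν (fun ω => (X ω, Y ω, Z ω)) (fun k => τ k.2.2) (fun ω => hτ ω),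
    H_add_split μ ν T hμ hν Z τ hτ]
  ring

end Add


/-- Computing the distribution of a "coordinate projection" via a product equivalence. -/
lemma distOf_proj {κ ρ : Type*} [Fintype κ] [DecidableEq κ] [Fintype ρ]
    (μ : Ω → ℝ) (e : Ω ≃ κ × ρ) (t : κ) :
    distOf μ (fun z => (e z).1) t = ∑ r, μ (e.symm (t, r)) := by
  unfold distOf
  rw [← Equiv.sum_comp e.symm (fun z => if (e z).1 = t then μ z else 0)]
  simp only [Equiv.apply_symm_apply]
  rw [Fintype.sum_prod_type, Finset.sum_comm]
  simp

lemma nonempty_of_isPMF {κ : Type*} [Fintype κ] (p : κ → ℝ) (h : IsPMF p) : Nonempty κ := by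
  by_contra h'
  rw [not_nonempty_iff] at h'
  have := h.2
  rw [Finset.univ_eq_empty, Finset.sum_empty] at this
  exact one_ne_zero this.symm

end Base

section Mu4
variable {A1 A2 B1 B2 Q U2 : Type} [Fintype A1] [DecidableEq A1] [Fintype A2] [DecidableEq A2]
  [Fintype B1] [DecidableEq B1] [Fintype B2] [DecidableEq B2]
  [Fintype Q] [DecidableEq Q] [Fintype U2] [DecidableEq U2]
  (W : A1 → A2 → B1 × B2 → ℝ) (p2 : A2 → B2 → ℝ) (qq : A1 → B2 → B1 → ℝ)
  (pQ : Q → ℝ) (pX1c : Q → A1 → ℝ) (pU2c : Q → U2 → ℝ) (pX2c : Q → U2 → A2 → ℝ)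

/-- joint of (U2, Y2, (X2, Q)). -/
lemma C_M1 (hS2 : ∀ x1 x2 y2, ∑ y1, W x1 x2 (y1, y2) = p2 x2 y2)
    (hX1s : ∀ q, ∑ x1, pX1c q x1 = 1) (u : U2) (y2 : B2) (x2 : A2) (q : Q) :
    distOf (mu4 W pQ pX1c pU2c pX2c)
        (fun z => (z.2.1, z.2.2.2.2.2, (z.2.2.2.1, z.1))) (u, y2, (x2, q))
      = (pQ q * pU2c q u * pX2c q u x2) * p2 x2 y2 := by
  have h : distOf (mu4 W pQ pX1c pU2c pX2c)
      (fun z => (z.2.1, z.2.2.2.2.2, (z.2.2.2.1, z.1))) (u, y2, (x2, q))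
      = ∑ r : A1 × B1, mu4 W pQ pX1c pU2c pX2c (q, u, r.1, x2, r.2, y2) :=
    distOf_proj _ (⟨fun z => ((z.2.1, z.2.2.2.2.2, (z.2.2.2.1, z.1)), (z.2.2.1, z.2.2.2.2.1)),
     fun x => (x.1.2.2.2, x.1.1, x.2.1, x.1.2.2.1, x.2.2, x.1.2.1),
     fun z => rfl, fun x => rfl⟩ : (Q × U2 × A1 × A2 × B1 × B2) ≃ (U2 × B2 × (A2 × Q)) × (A1 × B1)) _
  rw [h]
  calc ∑ r : A1 × B1, mu4 W pQ pX1c pU2c pX2c (q, u, r.1, x2, r.2, y2)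
      = ∑ x1, ∑ y1, pQ q * pX1c q x1 * pU2c q u * pX2c q u x2 * W x1 x2 (y1, y2) := by
        rw [Fintype.sum_prod_type]; rfl
    _ = ∑ x1, ((pQ q * pU2c q u * pX2c q u x2) * pX1c q x1) * p2 x2 y2 := by
        refine Finset.sum_congr rfl fun x1 _ => ?_
        rw [← Finset.mul_sum, hS2 x1 x2 y2]
        ring
    _ = (pQ q * pU2c q u * pX2c q u x2) * p2 x2 y2 := by
        rw [← Finset.sum_mul, ← Finset.mul_sum, hX1s q, mul_one]

/-- joint of (U2, Y1, ((X1, Y2), Q)). -/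
lemma C_M2 (hWf : ∀ x1 x2 y1 y2, W x1 x2 (y1, y2) = p2 x2 y2 * qq x1 y2 y1)
    (u : U2) (y1 : B1) (x1 : A1) (y2 : B2) (q : Q) :
    distOf (mu4 W pQ pX1c pU2c pX2c)
        (fun z => (z.2.1, z.2.2.2.2.1, ((z.2.2.1, z.2.2.2.2.2), z.1))) (u, y1, ((x1, y2), q))
      = (pQ q * pX1c q x1 * pU2c q u * (∑ x2, pX2c q u x2 * p2 x2 y2)) * qq x1 y2 y1 := by
  have h : distOf (mu4 W pQ pX1c pU2c pX2c)
      (fun z => (z.2.1, z.2.2.2.2.1, ((z.2.2.1, z.2.2.2.2.2), z.1))) (u, y1, ((x1, y2), q))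
      = ∑ x2, mu4 W pQ pX1c pU2c pX2c (q, u, x1, x2, y1, y2) :=
    distOf_proj _ (⟨fun z => ((z.2.1, z.2.2.2.2.1, ((z.2.2.1, z.2.2.2.2.2), z.1)), z.2.2.2.1),
     fun x => (x.1.2.2.2, x.1.1, x.1.2.2.1.1, x.2, x.1.2.1, x.1.2.2.1.2),
     fun z => rfl, fun x => rfl⟩ :
       (Q × U2 × A1 × A2 × B1 × B2) ≃ (U2 × B1 × ((A1 × B2) × Q)) × A2) _
  rw [h]
  calc ∑ x2, mu4 W pQ pX1c pU2c pX2c (q, u, x1, x2, y1, y2)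
      = ∑ x2, ((pQ q * pX1c q x1 * pU2c q u) * qq x1 y2 y1) * (pX2c q u x2 * p2 x2 y2) := by
        refine Finset.sum_congr rfl fun x2 _ => ?_
        show pQ q * pX1c q x1 * pU2c q u * pX2c q u x2 * W x1 x2 (y1, y2) = _
        rw [hWf]
        ring
    _ = _ := by
        rw [← Finset.mul_sum]
        ring

/-- joint of (U2, X1, Q). -/
lemma C_M3 (hS1 : ∀ x1 x2, ∑ y1, ∑ y2, W x1 x2 (y1, y2) = 1)
    (hX2s : ∀ q u, ∑ x2, pX2c q u x2 = 1) (u : U2) (x1 : A1) (q : Q) :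
    distOf (mu4 W pQ pX1c pU2c pX2c) (fun z => (z.2.1, z.2.2.1, z.1)) (u, x1, q)
      = (pQ q * pU2c q u) * pX1c q x1 := by
  have h : distOf (mu4 W pQ pX1c pU2c pX2c) (fun z => (z.2.1, z.2.2.1, z.1)) (u, x1, q)
      = ∑ r : A2 × B1 × B2, mu4 W pQ pX1c pU2c pX2c (q, u, x1, r.1, r.2.1, r.2.2) :=
    distOf_proj _ (⟨fun z => ((z.2.1, z.2.2.1, z.1), (z.2.2.2.1, z.2.2.2.2.1, z.2.2.2.2.2)),
     fun x => (x.1.2.2, x.1.1, x.1.2.1, x.2.1, x.2.2.1, x.2.2.2),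
     fun z => rfl, fun x => rfl⟩ :
       (Q × U2 × A1 × A2 × B1 × B2) ≃ (U2 × A1 × Q) × (A2 × B1 × B2)) _
  rw [h]
  calc ∑ r : A2 × B1 × B2, mu4 W pQ pX1c pU2c pX2c (q, u, x1, r.1, r.2.1, r.2.2)
      = ∑ x2, ∑ y1, ∑ y2, pQ q * pX1c q x1 * pU2c q u * pX2c q u x2 * W x1 x2 (y1, y2) := by
        rw [Fintype.sum_prod_type]
        refine Finset.sum_congr rfl fun x2 _ => ?_
        rw [Fintype.sum_prod_type]; rfl
    _ = ∑ x2, ((pQ q * pU2c q u) * pX1c q x1) * pX2c q u x2 := by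
        refine Finset.sum_congr rfl fun x2 _ => ?_
        simp_rw [← Finset.mul_sum]
        rw [hS1 x1 x2]
        ring
    _ = (pQ q * pU2c q u) * pX1c q x1 := by
        rw [← Finset.mul_sum, hX2s q u, mul_one]

/-- joint of (U2, X1, (Y2, Q)). -/
lemma C_M4 (hS2 : ∀ x1 x2 y2, ∑ y1, W x1 x2 (y1, y2) = p2 x2 y2)
    (u : U2) (x1 : A1) (y2 : B2) (q : Q) :
    distOf (mu4 W pQ pX1c pU2c pX2c) (fun z => (z.2.1, z.2.2.1, (z.2.2.2.2.2, z.1)))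
        (u, x1, (y2, q))
      = (pQ q * pU2c q u * (∑ x2, pX2c q u x2 * p2 x2 y2)) * pX1c q x1 := by
  have h : distOf (mu4 W pQ pX1c pU2c pX2c) (fun z => (z.2.1, z.2.2.1, (z.2.2.2.2.2, z.1)))
      (u, x1, (y2, q))
      = ∑ r : A2 × B1, mu4 W pQ pX1c pU2c pX2c (q, u, x1, r.1, r.2, y2) :=
    distOf_proj _ (⟨fun z => ((z.2.1, z.2.2.1, (z.2.2.2.2.2, z.1)), (z.2.2.2.1, z.2.2.2.2.1)),
     fun x => (x.1.2.2.2, x.1.1, x.1.2.1, x.2.1, x.2.2, x.1.2.2.1),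
     fun z => rfl, fun x => rfl⟩ :
       (Q × U2 × A1 × A2 × B1 × B2) ≃ (U2 × A1 × (B2 × Q)) × (A2 × B1)) _
  rw [h]
  calc ∑ r : A2 × B1, mu4 W pQ pX1c pU2c pX2c (q, u, x1, r.1, r.2, y2)
      = ∑ x2, ∑ y1, pQ q * pX1c q x1 * pU2c q u * pX2c q u x2 * W x1 x2 (y1, y2) := by
        rw [Fintype.sum_prod_type]; rfl
    _ = ∑ x2, ((pQ q * pU2c q u) * pX1c q x1) * (pX2c q u x2 * p2 x2 y2) := by
        refine Finset.sum_congr rfl fun x2 _ => ?_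
        rw [← Finset.mul_sum, hS2 x1 x2 y2]
        ring
    _ = _ := by
        rw [← Finset.mul_sum]
        ring

/-- the U2-marginal of mu4. -/
lemma C_marg (w : Q × A1 × A2 × B1 × B2) :
    distOf (mu4 W pQ pX1c pU2c pX2c) (fun z => (z.1, z.2.2)) w
      = pQ w.1 * pX1c w.1 w.2.1 * (∑ u, pU2c w.1 u * pX2c w.1 u w.2.2.1) *
          W w.2.1 w.2.2.1 (w.2.2.2.1, w.2.2.2.2) := by
  have h : distOf (mu4 W pQ pX1c pU2c pX2c) (fun z => (z.1, z.2.2)) w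
      = ∑ u, mu4 W pQ pX1c pU2c pX2c (w.1, u, w.2) :=
    distOf_proj _ (⟨fun z => ((z.1, z.2.2), z.2.1), fun x => (x.1.1, x.2, x.1.2),
     fun z => rfl, fun x => rfl⟩ :
       (Q × U2 × A1 × A2 × B1 × B2) ≃ (Q × A1 × A2 × B1 × B2) × U2) _
  rw [h]
  obtain ⟨q, x1, x2, y1, y2⟩ := w
  calc ∑ u, mu4 W pQ pX1c pU2c pX2c (q, u, x1, x2, y1, y2)
      = ∑ u, (pQ q * pX1c q x1 * W x1 x2 (y1, y2)) * (pU2c q u * pX2c q u x2) := by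
        refine Finset.sum_congr rfl fun u _ => ?_
        show pQ q * pX1c q x1 * pU2c q u * pX2c q u x2 * W x1 x2 (y1, y2) = _
        ring
    _ = _ := by
        rw [← Finset.mul_sum]
        ring


/-- The key information inequalities for `mu4` under weak interference. -/
lemma key_facts
    (hWch : ∀ x1 x2, IsPMF (W x1 x2))
    (hWf : ∀ x1 x2 y1 y2, W x1 x2 (y1, y2) = p2 x2 y2 * qq x1 y2 y1)
    (hp2 : ∀ x2, IsPMF (p2 x2)) (hqq : ∀ x1 y2, IsPMF (qq x1 y2))
    (hpQ : IsPMF pQ) (hpX1 : ∀ q, IsPMF (pX1c q)) (hpU2 : ∀ q, IsPMF (pU2c q))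
    (hpX2 : ∀ q u, IsPMF (pX2c q u)) :
    (CMI (mu4 W pQ pX1c pU2c pX2c) (fun z => (z.2.1, z.2.2.1)) (fun z => z.2.2.2.2.1)
        (fun z => z.1)
      = CMI (mu4 W pQ pX1c pU2c pX2c) (fun z => z.2.1) (fun z => z.2.2.2.2.1) (fun z => z.1)
        + CMI (mu4 W pQ pX1c pU2c pX2c) (fun z => z.2.2.1) (fun z => z.2.2.2.2.1)
            (fun z => (z.2.1, z.1))) ∧
    (CMI (mu4 W pQ pX1c pU2c pX2c) (fun z => z.2.1) (fun z => z.2.2.2.2.1) (fun z => z.1)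
        + CMI (mu4 W pQ pX1c pU2c pX2c) (fun z => z.2.2.2.1) (fun z => z.2.2.2.2.2)
            (fun z => (z.2.1, z.1))
      ≤ CMI (mu4 W pQ pX1c pU2c pX2c) (fun z => z.2.2.2.1) (fun z => z.2.2.2.2.2)
          (fun z => z.1)) ∧
    (CMI (mu4 W pQ pX1c pU2c pX2c) (fun z => z.2.2.1) (fun z => z.2.2.2.2.1)
          (fun z => (z.2.1, z.1))
        + CMI (mu4 W pQ pX1c pU2c pX2c) (fun z => z.2.1) (fun z => z.2.2.2.2.1) (fun z => z.1)
        + CMI (mu4 W pQ pX1c pU2c pX2c) (fun z => z.2.2.2.1) (fun z => z.2.2.2.2.2)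
            (fun z => (z.2.1, z.1))
      ≤ CMI (mu4 W pQ pX1c pU2c pX2c) (fun z => z.2.2.1) (fun z => z.2.2.2.2.1) (fun z => z.1)
        + CMI (mu4 W pQ pX1c pU2c pX2c) (fun z => z.2.2.2.1) (fun z => z.2.2.2.2.2)
            (fun z => z.1)) := by
  classical
  set μ := mu4 W pQ pX1c pU2c pX2c with hμdef
  have hμnn : ∀ z, 0 ≤ μ z := by
    intro z
    have hw := (hWch z.2.2.1 z.2.2.2.1).1 (z.2.2.2.2.1, z.2.2.2.2.2)
    exact mul_nonneg (mul_nonneg (mul_nonneg (mul_nonneg (hpQ.1 _) ((hpX1 _).1 _))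
      ((hpU2 _).1 _)) ((hpX2 _ _).1 _)) hw
  have hS1 : ∀ x1 x2, ∑ y1, ∑ y2, W x1 x2 (y1, y2) = 1 := by
    intro x1 x2
    have := (hWch x1 x2).2
    rw [Fintype.sum_prod_type] at this
    exact this
  have hS2 : ∀ x1 x2 y2, ∑ y1, W x1 x2 (y1, y2) = p2 x2 y2 := by
    intro x1 x2 y2
    simp_rw [hWf]
    rw [← Finset.mul_sum, (hqq x1 y2).2, mul_one]
  have hX1s : ∀ q, ∑ x1, pX1c q x1 = 1 := fun q => (hpX1 q).2
  have hX2s : ∀ q u, ∑ x2, pX2c q u x2 = 1 := fun q u => (hpX2 q u).2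
  -- the vanishing conditional mutual informations
  have hzM1 : CMI μ (fun z => z.2.1) (fun z => z.2.2.2.2.2) (fun z => (z.2.2.2.1, z.1)) = 0 := by
    refine CMI_eq_zero_of_factor μ hμnn _ _ _
      (fun u c => pQ c.2 * pU2c c.2 u * pX2c c.2 u c.1) (fun y2 c => p2 c.1 y2)
      (fun u c => mul_nonneg (mul_nonneg (hpQ.1 _) ((hpU2 _).1 _)) ((hpX2 _ _).1 _))
      (fun y2 c => (hp2 _).1 _) ?_
    rintro u y2 ⟨x2, q⟩
    exact C_M1 W p2 pQ pX1c pU2c pX2c hS2 hX1s u y2 x2 q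
  have hzM2 : CMI μ (fun z => z.2.1) (fun z => z.2.2.2.2.1)
      (fun z => ((z.2.2.1, z.2.2.2.2.2), z.1)) = 0 := by
    refine CMI_eq_zero_of_factor μ hμnn _ _ _
      (fun u c => pQ c.2 * pX1c c.2 c.1.1 * pU2c c.2 u * (∑ x2, pX2c c.2 u x2 * p2 x2 c.1.2))
      (fun y1 c => qq c.1.1 c.1.2 y1)
      (fun u c => mul_nonneg (mul_nonneg (mul_nonneg (hpQ.1 _) ((hpX1 _).1 _)) ((hpU2 _).1 _))
        (Finset.sum_nonneg fun x2 _ => mul_nonneg ((hpX2 _ _).1 _) ((hp2 _).1 _)))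
      (fun y1 c => (hqq _ _).1 _) ?_
    rintro u y1 ⟨⟨x1, y2⟩, q⟩
    exact C_M2 W p2 qq pQ pX1c pU2c pX2c hWf u y1 x1 y2 q
  have hzM2' : CMI μ (fun z => z.2.1) (fun z => z.2.2.2.2.1)
      (fun z => (z.2.2.2.2.2, (z.2.2.1, z.1))) = 0 := by
    rw [CMI_congr μ (fun z => z.2.1) (fun z => z.2.2.2.2.1)
      (fun z => (z.2.2.2.2.2, (z.2.2.1, z.1))) (fun z => z.2.1) (fun z => z.2.2.2.2.1)
      (fun z => ((z.2.2.1, z.2.2.2.2.2), z.1)) (fun _ _ => Iff.rfl) (fun _ _ => Iff.rfl)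
      (fun ω ω' => by simp only [Prod.mk.injEq]; tauto)]
    exact hzM2
  have hzM3 : CMI μ (fun z => z.2.1) (fun z => z.2.2.1) (fun z => z.1) = 0 := by
    refine CMI_eq_zero_of_factor μ hμnn _ _ _
      (fun u c => pQ c * pU2c c u) (fun x1 c => pX1c c x1)
      (fun u c => mul_nonneg (hpQ.1 _) ((hpU2 _).1 _)) (fun x1 c => (hpX1 _).1 _) ?_
    intro u x1 q
    exact C_M3 W pQ pX1c pU2c pX2c hS1 hX2s u x1 q
  have hzM4 : CMI μ (fun z => z.2.1) (fun z => z.2.2.1) (fun z => (z.2.2.2.2.2, z.1)) = 0 := by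
    refine CMI_eq_zero_of_factor μ hμnn _ _ _
      (fun u c => pQ c.2 * pU2c c.2 u * (∑ x2, pX2c c.2 u x2 * p2 x2 c.1))
      (fun x1 c => pX1c c.2 x1)
      (fun u c => mul_nonneg (mul_nonneg (hpQ.1 _) ((hpU2 _).1 _))
        (Finset.sum_nonneg fun x2 _ => mul_nonneg ((hpX2 _ _).1 _) ((hp2 _).1 _)))
      (fun x1 c => (hpX1 _).1 _) ?_
    rintro u x1 ⟨y2, q⟩
    exact C_M4 W p2 pQ pX1c pU2c pX2c hS2 u x1 y2 q
  -- abbreviations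
  have P1 : CMI μ (fun z => (z.2.1, z.2.2.1)) (fun z => z.2.2.2.2.1) (fun z => z.1)
      = CMI μ (fun z => z.2.1) (fun z => z.2.2.2.2.1) (fun z => z.1)
        + CMI μ (fun z => z.2.2.1) (fun z => z.2.2.2.2.1) (fun z => (z.2.1, z.1)) :=
    CMI_chain μ (fun z => z.2.1) (fun z => z.2.2.1) (fun z => z.2.2.2.2.1) (fun z => z.1)
  have P2 : CMI μ (fun z => (z.2.1, z.2.2.1)) (fun z => z.2.2.2.2.1) (fun z => z.1)
      = CMI μ (fun z => z.2.2.1) (fun z => z.2.2.2.2.1) (fun z => z.1)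
        + CMI μ (fun z => z.2.1) (fun z => z.2.2.2.2.1) (fun z => (z.2.2.1, z.1)) := by
    rw [CMI_congr μ (fun z => (z.2.1, z.2.2.1)) (fun z => z.2.2.2.2.1) (fun z => z.1)
      (fun z => (z.2.2.1, z.2.1)) (fun z => z.2.2.2.2.1) (fun z => z.1)
      (fun ω ω' => by simp only [Prod.mk.injEq]; tauto) (fun _ _ => Iff.rfl)
      (fun _ _ => Iff.rfl)]
    exact CMI_chain μ (fun z => z.2.2.1) (fun z => z.2.1) (fun z => z.2.2.2.2.1) (fun z => z.1)
  have P3 : CMI μ (fun z => z.2.2.2.1) (fun z => z.2.2.2.2.2) (fun z => z.1)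
      = CMI μ (fun z => z.2.1) (fun z => z.2.2.2.2.2) (fun z => z.1)
        + CMI μ (fun z => z.2.2.2.1) (fun z => z.2.2.2.2.2) (fun z => (z.2.1, z.1)) := by
    have h1 : CMI μ (fun z => (z.2.1, z.2.2.2.1)) (fun z => z.2.2.2.2.2) (fun z => z.1)
        = CMI μ (fun z => z.2.1) (fun z => z.2.2.2.2.2) (fun z => z.1)
          + CMI μ (fun z => z.2.2.2.1) (fun z => z.2.2.2.2.2) (fun z => (z.2.1, z.1)) :=
      CMI_chain μ (fun z => z.2.1) (fun z => z.2.2.2.1) (fun z => z.2.2.2.2.2) (fun z => z.1)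
    have h2 : CMI μ (fun z => (z.2.2.2.1, z.2.1)) (fun z => z.2.2.2.2.2) (fun z => z.1)
        = CMI μ (fun z => z.2.2.2.1) (fun z => z.2.2.2.2.2) (fun z => z.1)
          + CMI μ (fun z => z.2.1) (fun z => z.2.2.2.2.2) (fun z => (z.2.2.2.1, z.1)) :=
      CMI_chain μ (fun z => z.2.2.2.1) (fun z => z.2.1) (fun z => z.2.2.2.2.2) (fun z => z.1)
    have h3 : CMI μ (fun z => (z.2.1, z.2.2.2.1)) (fun z => z.2.2.2.2.2) (fun z => z.1)
        = CMI μ (fun z => (z.2.2.2.1, z.2.1)) (fun z => z.2.2.2.2.2) (fun z => z.1) :=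
      CMI_congr μ _ _ _ _ _ _ (fun ω ω' => by simp only [Prod.mk.injEq]; tauto)
        (fun _ _ => Iff.rfl) (fun _ _ => Iff.rfl)
    rw [hzM1] at h2
    rw [← h1, h3, h2]
    ring
  -- J = K = G
  have j1 : CMI μ (fun z => (z.2.2.1, z.2.2.2.2.2)) (fun z => z.2.1) (fun z => z.1)
      = CMI μ (fun z => z.2.2.1) (fun z => z.2.1) (fun z => z.1)
        + CMI μ (fun z => z.2.2.2.2.2) (fun z => z.2.1) (fun z => (z.2.2.1, z.1)) :=
    CMI_chain μ (fun z => z.2.2.1) (fun z => z.2.2.2.2.2) (fun z => z.2.1) (fun z => z.1)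
  have hc1 : CMI μ (fun z => z.2.2.1) (fun z => z.2.1) (fun z => z.1)
      = CMI μ (fun z => z.2.1) (fun z => z.2.2.1) (fun z => z.1) :=
    CMI_comm μ _ _ _
  have j1' : CMI μ (fun z => (z.2.2.1, z.2.2.2.2.2)) (fun z => z.2.1) (fun z => z.1)
      = CMI μ (fun z => z.2.2.2.2.2) (fun z => z.2.1) (fun z => (z.2.2.1, z.1)) := by
    rw [j1, hc1, hzM3, zero_add]
  have j2 : CMI μ (fun z => (z.2.2.2.2.2, z.2.2.1)) (fun z => z.2.1) (fun z => z.1)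
      = CMI μ (fun z => z.2.2.2.2.2) (fun z => z.2.1) (fun z => z.1)
        + CMI μ (fun z => z.2.2.1) (fun z => z.2.1) (fun z => (z.2.2.2.2.2, z.1)) :=
    CMI_chain μ (fun z => z.2.2.2.2.2) (fun z => z.2.2.1) (fun z => z.2.1) (fun z => z.1)
  have hc2 : CMI μ (fun z => z.2.2.1) (fun z => z.2.1) (fun z => (z.2.2.2.2.2, z.1))
      = CMI μ (fun z => z.2.1) (fun z => z.2.2.1) (fun z => (z.2.2.2.2.2, z.1)) :=
    CMI_comm μ _ _ _
  have hc3 : CMI μ (fun z => z.2.2.2.2.2) (fun z => z.2.1) (fun z => z.1)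
      = CMI μ (fun z => z.2.1) (fun z => z.2.2.2.2.2) (fun z => z.1) :=
    CMI_comm μ _ _ _
  have jsw : CMI μ (fun z => (z.2.2.1, z.2.2.2.2.2)) (fun z => z.2.1) (fun z => z.1)
      = CMI μ (fun z => (z.2.2.2.2.2, z.2.2.1)) (fun z => z.2.1) (fun z => z.1) :=
    CMI_congr μ _ _ _ _ _ _ (fun ω ω' => by simp only [Prod.mk.injEq]; tauto)
      (fun _ _ => Iff.rfl) (fun _ _ => Iff.rfl)
  have jG : CMI μ (fun z => (z.2.2.1, z.2.2.2.2.2)) (fun z => z.2.1) (fun z => z.1)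
      = CMI μ (fun z => z.2.1) (fun z => z.2.2.2.2.2) (fun z => z.1) := by
    rw [jsw, j2, hc2, hc3, hzM4, add_zero]
  have hKG : CMI μ (fun z => z.2.2.2.2.2) (fun z => z.2.1) (fun z => (z.2.2.1, z.1))
      = CMI μ (fun z => z.2.1) (fun z => z.2.2.2.2.2) (fun z => z.1) := by
    rw [← j1', jG]
  -- E ≤ G
  have t1 : CMI μ (fun z => ((z.2.2.1, z.2.2.2.2.2), z.2.2.2.2.1)) (fun z => z.2.1)
        (fun z => z.1)
      = CMI μ (fun z => (z.2.2.1, z.2.2.2.2.2)) (fun z => z.2.1) (fun z => z.1)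
        + CMI μ (fun z => z.2.2.2.2.1) (fun z => z.2.1)
            (fun z => ((z.2.2.1, z.2.2.2.2.2), z.1)) :=
    CMI_chain μ (fun z => (z.2.2.1, z.2.2.2.2.2)) (fun z => z.2.2.2.2.1) (fun z => z.2.1)
      (fun z => z.1)
  have hc4 : CMI μ (fun z => z.2.2.2.2.1) (fun z => z.2.1)
        (fun z => ((z.2.2.1, z.2.2.2.2.2), z.1))
      = CMI μ (fun z => z.2.1) (fun z => z.2.2.2.2.1)
          (fun z => ((z.2.2.1, z.2.2.2.2.2), z.1)) :=
    CMI_comm μ _ _ _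
  have t2 : CMI μ (fun z => (z.2.2.2.2.1, (z.2.2.1, z.2.2.2.2.2))) (fun z => z.2.1)
        (fun z => z.1)
      = CMI μ (fun z => z.2.2.2.2.1) (fun z => z.2.1) (fun z => z.1)
        + CMI μ (fun z => (z.2.2.1, z.2.2.2.2.2)) (fun z => z.2.1)
            (fun z => (z.2.2.2.2.1, z.1)) :=
    CMI_chain μ (fun z => z.2.2.2.2.1) (fun z => (z.2.2.1, z.2.2.2.2.2)) (fun z => z.2.1)
      (fun z => z.1)
  have tsw : CMI μ (fun z => ((z.2.2.1, z.2.2.2.2.2), z.2.2.2.2.1)) (fun z => z.2.1)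
        (fun z => z.1)
      = CMI μ (fun z => (z.2.2.2.2.1, (z.2.2.1, z.2.2.2.2.2))) (fun z => z.2.1)
          (fun z => z.1) :=
    CMI_congr μ _ _ _ _ _ _ (fun ω ω' => by simp only [Prod.mk.injEq]; tauto)
      (fun _ _ => Iff.rfl) (fun _ _ => Iff.rfl)
  have hc5 : CMI μ (fun z => z.2.2.2.2.1) (fun z => z.2.1) (fun z => z.1)
      = CMI μ (fun z => z.2.1) (fun z => z.2.2.2.2.1) (fun z => z.1) :=
    CMI_comm μ _ _ _
  have hnn1 : 0 ≤ CMI μ (fun z => (z.2.2.1, z.2.2.2.2.2)) (fun z => z.2.1)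
      (fun z => (z.2.2.2.2.1, z.1)) := CMI_nonneg μ hμnn _ _ _
  have hEG : CMI μ (fun z => z.2.1) (fun z => z.2.2.2.2.1) (fun z => z.1)
      ≤ CMI μ (fun z => z.2.1) (fun z => z.2.2.2.2.2) (fun z => z.1) := by
    have hT : CMI μ (fun z => ((z.2.2.1, z.2.2.2.2.2), z.2.2.2.2.1)) (fun z => z.2.1)
        (fun z => z.1) = CMI μ (fun z => z.2.1) (fun z => z.2.2.2.2.2) (fun z => z.1) := by
      rw [t1, hc4, hzM2, add_zero, jG]
    rw [← hT, tsw, t2, hc5]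
    linarith
  -- Fstar ≤ G
  have u1 : CMI μ (fun z => (z.2.2.2.2.2, z.2.2.2.2.1)) (fun z => z.2.1)
        (fun z => (z.2.2.1, z.1))
      = CMI μ (fun z => z.2.2.2.2.2) (fun z => z.2.1) (fun z => (z.2.2.1, z.1))
        + CMI μ (fun z => z.2.2.2.2.1) (fun z => z.2.1)
            (fun z => (z.2.2.2.2.2, (z.2.2.1, z.1))) :=
    CMI_chain μ (fun z => z.2.2.2.2.2) (fun z => z.2.2.2.2.1) (fun z => z.2.1)
      (fun z => (z.2.2.1, z.1))
  have hc6 : CMI μ (fun z => z.2.2.2.2.1) (fun z => z.2.1)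
        (fun z => (z.2.2.2.2.2, (z.2.2.1, z.1)))
      = CMI μ (fun z => z.2.1) (fun z => z.2.2.2.2.1)
          (fun z => (z.2.2.2.2.2, (z.2.2.1, z.1))) :=
    CMI_comm μ _ _ _
  have u2eq : CMI μ (fun z => (z.2.2.2.2.1, z.2.2.2.2.2)) (fun z => z.2.1)
        (fun z => (z.2.2.1, z.1))
      = CMI μ (fun z => z.2.2.2.2.1) (fun z => z.2.1) (fun z => (z.2.2.1, z.1))
        + CMI μ (fun z => z.2.2.2.2.2) (fun z => z.2.1)
            (fun z => (z.2.2.2.2.1, (z.2.2.1, z.1))) :=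
    CMI_chain μ (fun z => z.2.2.2.2.1) (fun z => z.2.2.2.2.2) (fun z => z.2.1)
      (fun z => (z.2.2.1, z.1))
  have usw : CMI μ (fun z => (z.2.2.2.2.2, z.2.2.2.2.1)) (fun z => z.2.1)
        (fun z => (z.2.2.1, z.1))
      = CMI μ (fun z => (z.2.2.2.2.1, z.2.2.2.2.2)) (fun z => z.2.1)
          (fun z => (z.2.2.1, z.1)) :=
    CMI_congr μ _ _ _ _ _ _ (fun ω ω' => by simp only [Prod.mk.injEq]; tauto)
      (fun _ _ => Iff.rfl) (fun _ _ => Iff.rfl)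
  have hc7 : CMI μ (fun z => z.2.2.2.2.1) (fun z => z.2.1) (fun z => (z.2.2.1, z.1))
      = CMI μ (fun z => z.2.1) (fun z => z.2.2.2.2.1) (fun z => (z.2.2.1, z.1)) :=
    CMI_comm μ _ _ _
  have hnn2 : 0 ≤ CMI μ (fun z => z.2.2.2.2.2) (fun z => z.2.1)
      (fun z => (z.2.2.2.2.1, (z.2.2.1, z.1))) := CMI_nonneg μ hμnn _ _ _
  have hFG : CMI μ (fun z => z.2.1) (fun z => z.2.2.2.2.1) (fun z => (z.2.2.1, z.1))
      ≤ CMI μ (fun z => z.2.1) (fun z => z.2.2.2.2.2) (fun z => z.1) := by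
    have hT2 : CMI μ (fun z => (z.2.2.2.2.2, z.2.2.2.2.1)) (fun z => z.2.1)
        (fun z => (z.2.2.1, z.1))
        = CMI μ (fun z => z.2.1) (fun z => z.2.2.2.2.2) (fun z => z.1) := by
      rw [u1, hc6, hzM2', add_zero, hKG]
    rw [← hT2, usw, u2eq, hc7]
    linarith
  refine ⟨P1, ?_, ?_⟩
  · linarith [P3, hEG]
  · linarith [P1, P2, P3, hFG]

end Mu4

def mixQ {Q : Type} (pQ : Q → ℝ) (lam : ℝ) : Q × Bool → ℝ :=
  fun qt => pQ qt.1 * (if qt.2 then lam else 1 - lam)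
def mixX1 {Q A1 : Type} (pX1c : Q → A1 → ℝ) : Q × Bool → A1 → ℝ := fun qt => pX1c qt.1
def mixU2 {Q U2 : Type} [DecidableEq U2] (pU2c : Q → U2 → ℝ) (u0 : U2) : Q × Bool → U2 → ℝ :=
  fun qt u => if qt.2 then pU2c qt.1 u else (if u = u0 then 1 else 0)
def mixX2 {Q U2 A2 : Type} [Fintype U2] (pU2c : Q → U2 → ℝ) (pX2c : Q → U2 → A2 → ℝ) :
    Q × Bool → U2 → A2 → ℝ :=
  fun qt u x2 => if qt.2 then pX2c qt.1 u x2 else (∑ u', pU2c qt.1 u' * pX2c qt.1 u' x2)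

section Mix
variable {A1 A2 B1 B2 Q U2 : Type} [Fintype A1] [DecidableEq A1] [Fintype A2] [DecidableEq A2]
  [Fintype B1] [DecidableEq B1] [Fintype B2] [DecidableEq B2]
  [Fintype Q] [DecidableEq Q] [Fintype U2] [DecidableEq U2]
  (W : A1 → A2 → B1 × B2 → ℝ)
  (pQ : Q → ℝ) (pX1c : Q → A1 → ℝ) (pU2c : Q → U2 → ℝ) (pX2c : Q → U2 → A2 → ℝ)
  (lam : ℝ) (u0 : U2)

lemma mix_pmf (hpQ : IsPMF pQ) (hpX1 : ∀ q, IsPMF (pX1c q)) (hpU2 : ∀ q, IsPMF (pU2c q))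
    (hpX2 : ∀ q u, IsPMF (pX2c q u)) (hlam0 : 0 ≤ lam) (hlam1 : lam ≤ 1) :
    IsPMF (mixQ pQ lam) ∧ (∀ q, IsPMF (mixX1 pX1c q)) ∧ (∀ q, IsPMF (mixU2 pU2c u0 q)) ∧
      (∀ q u, IsPMF (mixX2 pU2c pX2c q u)) := by
  refine ⟨⟨?_, ?_⟩, fun q => hpX1 q.1, fun q => ?_, fun q u => ?_⟩
  · rintro ⟨q, t⟩
    refine mul_nonneg (hpQ.1 q) ?_
    cases t <;> simp [hlam0] <;> linarith
  · rw [Fintype.sum_prod_type]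
    have : ∀ q : Q, (∑ t : Bool, mixQ pQ lam (q, t)) = pQ q := by
      intro q
      rw [Fintype.sum_bool]
      simp only [mixQ, if_true, Bool.false_eq_true, if_false]
      ring
    simp_rw [this]
    exact hpQ.2
  · obtain ⟨q, t⟩ := q
    cases t
    · constructor
      · intro u
        simp only [mixU2, Bool.false_eq_true, if_false]
        split <;> norm_num
      · simp only [mixU2, Bool.false_eq_true, if_false]
        simp
    · constructor
      · intro u
        simpa [mixU2] using (hpU2 q).1 u
      · simpa [mixU2] using (hpU2 q).2
  · obtain ⟨q, t⟩ := q
    cases t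
    · constructor
      · intro x2
        simp only [mixX2, Bool.false_eq_true, if_false]
        exact Finset.sum_nonneg fun u' _ => mul_nonneg ((hpU2 q).1 u') ((hpX2 q u').1 x2)
      · simp only [mixX2, Bool.false_eq_true, if_false]
        rw [Finset.sum_comm]
        have : ∀ u' : U2, (∑ x2, pU2c q u' * pX2c q u' x2) = pU2c q u' := by
          intro u'
          rw [← Finset.mul_sum, (hpX2 q u').2, mul_one]
        simp_rw [this]
        exact (hpU2 q).2
    · constructor
      · intro x2
        simpa [mixX2] using (hpX2 q u).1 x2
      · simpa [mixX2] using (hpX2 q u).2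


lemma mix_facts (W : A1 → A2 → B1 × B2 → ℝ) (hlam0 : 0 ≤ lam) (hlam1 : lam ≤ 1) :
    (CMI (mu4 W (mixQ pQ lam) (mixX1 pX1c) (mixU2 pU2c u0) (mixX2 pU2c pX2c))
        (fun z => z.2.2.1) (fun z => z.2.2.2.2.1) (fun z => (z.2.1, z.1))
      = lam * CMI (mu4 W pQ pX1c pU2c pX2c) (fun z => z.2.2.1) (fun z => z.2.2.2.2.1)
            (fun z => (z.2.1, z.1))
        + (1 - lam) * CMI (mu4 W pQ pX1c pU2c pX2c) (fun z => z.2.2.1)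
            (fun z => z.2.2.2.2.1) (fun z => z.1)) ∧
    (CMI (mu4 W (mixQ pQ lam) (mixX1 pX1c) (mixU2 pU2c u0) (mixX2 pU2c pX2c))
        (fun z => z.2.1) (fun z => z.2.2.2.2.1) (fun z => z.1)
      = lam * CMI (mu4 W pQ pX1c pU2c pX2c) (fun z => z.2.1) (fun z => z.2.2.2.2.1)
            (fun z => z.1)) ∧
    (CMI (mu4 W (mixQ pQ lam) (mixX1 pX1c) (mixU2 pU2c u0) (mixX2 pU2c pX2c))
        (fun z => z.2.2.2.1) (fun z => z.2.2.2.2.2) (fun z => (z.2.1, z.1))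
      = lam * CMI (mu4 W pQ pX1c pU2c pX2c) (fun z => z.2.2.2.1) (fun z => z.2.2.2.2.2)
            (fun z => (z.2.1, z.1))
        + (1 - lam) * CMI (mu4 W pQ pX1c pU2c pX2c) (fun z => z.2.2.2.1)
            (fun z => z.2.2.2.2.2) (fun z => z.1)) := by
  set μ := mu4 W pQ pX1c pU2c pX2c with hμdef
  set μ' := mu4 W (mixQ pQ lam) (mixX1 pX1c) (mixU2 pU2c u0) (mixX2 pU2c pX2c) with hμ'def
  set μ1 : (Q × Bool) × U2 × A1 × A2 × B1 × B2 → ℝ :=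
    fun ω => if ω.1.2 = true then μ' ω else 0 with hμ1def
  set μ0 : (Q × Bool) × U2 × A1 × A2 × B1 × B2 → ℝ :=
    fun ω => if ω.1.2 = false then μ' ω else 0 with hμ0def
  have hμsplit : μ' = fun ω => μ1 ω + μ0 ω := by
    funext ω
    rw [hμ1def, hμ0def]
    dsimp only
    rcases Bool.eq_false_or_eq_true ω.1.2 with h | h <;> rw [h] <;> simp
  set m0 : Q × A1 × A2 × B1 × B2 → ℝ :=
    fun w => pQ w.1 * pX1c w.1 w.2.1 * (∑ u, pU2c w.1 u * pX2c w.1 u w.2.2.1) *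
      W w.2.1 w.2.2.1 (w.2.2.2.1, w.2.2.2.2) with hm0def
  set ι₁ : Q × U2 × A1 × A2 × B1 × B2 → (Q × Bool) × U2 × A1 × A2 × B1 × B2 :=
    fun z => ((z.1, true), z.2) with hι₁def
  set ι₀ : Q × A1 × A2 × B1 × B2 → (Q × Bool) × U2 × A1 × A2 × B1 × B2 :=
    fun w => ((w.1, false), u0, w.2) with hι₀def
  -- μ1 is the pushforward of lam • μ under ι₁
  have hν1 : ∀ ω', μ1 ω' = ∑ z, if ι₁ z = ω' then lam * μ z else 0 := by
    rintro ⟨⟨q, t⟩, u, x1, x2, y1, y2⟩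
    cases t
    · rw [hμ1def]
      simp only [Bool.false_eq_true, if_false]
      symm
      refine Finset.sum_eq_zero fun z _ => ?_
      rw [if_neg]
      intro h
      rw [hι₁def] at h
      simp only [Prod.mk.injEq] at h
      exact Bool.true_eq_false.mp h.1.2
    · have hcond : ∀ z : Q × U2 × A1 × A2 × B1 × B2,
          (ι₁ z = ((q, true), u, x1, x2, y1, y2)) ↔ z = (q, u, x1, x2, y1, y2) := by
        intro z
        rw [hι₁def]
        simp only [Prod.mk.injEq, Prod.ext_iff]
        tauto
      simp_rw [hcond]
      rw [Finset.sum_ite_eq' Finset.univ ((q, u, x1, x2, y1, y2) : Q × U2 × A1 × A2 × B1 × B2)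
        (fun z => lam * μ z), if_pos (Finset.mem_univ _)]
      rw [hμ1def]
      simp only [if_pos rfl]
      rw [hμ'def, hμdef]
      show mu4 W (mixQ pQ lam) (mixX1 pX1c) (mixU2 pU2c u0) (mixX2 pU2c pX2c)
        ((q, true), u, x1, x2, y1, y2) = lam * mu4 W pQ pX1c pU2c pX2c (q, u, x1, x2, y1, y2)
      simp [mu4, mixQ, mixX1, mixU2, mixX2]
      ring
  -- μ0 is the pushforward of (1 - lam) • m0 under ι₀
  have hν0 : ∀ ω', μ0 ω' = ∑ w, if ι₀ w = ω' then (1 - lam) * m0 w else 0 := by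
    rintro ⟨⟨q, t⟩, u, x1, x2, y1, y2⟩
    cases t
    · by_cases hu : u = u0
      · rw [hu]
        have hcond : ∀ w : Q × A1 × A2 × B1 × B2,
            (ι₀ w = ((q, false), u0, x1, x2, y1, y2)) ↔ w = (q, x1, x2, y1, y2) := by
          intro w
          rw [hι₀def]
          simp only [Prod.mk.injEq, Prod.ext_iff]
          tauto
        simp_rw [hcond]
        rw [Finset.sum_ite_eq' Finset.univ ((q, x1, x2, y1, y2) : Q × A1 × A2 × B1 × B2)
          (fun w => (1 - lam) * m0 w), if_pos (Finset.mem_univ _)]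
        rw [hμ0def]
        simp only [if_pos rfl]
        rw [hμ'def, hm0def]
        show mu4 W (mixQ pQ lam) (mixX1 pX1c) (mixU2 pU2c u0) (mixX2 pU2c pX2c)
            ((q, false), u0, x1, x2, y1, y2)
          = (1 - lam) * (pQ q * pX1c q x1 * (∑ u', pU2c q u' * pX2c q u' x2) *
              W x1 x2 (y1, y2))
        simp [mu4, mixQ, mixX1, mixU2, mixX2]
        ring
      · rw [hμ0def]
        simp only [if_pos rfl]
        rw [hμ'def]
        have hz : mu4 W (mixQ pQ lam) (mixX1 pX1c) (mixU2 pU2c u0) (mixX2 pU2c pX2c)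
            ((q, false), u, x1, x2, y1, y2) = 0 := by
          simp [mu4, mixQ, mixX1, mixU2, mixX2, hu]
        rw [hz]
        symm
        refine Finset.sum_eq_zero fun w _ => ?_
        rw [if_neg]
        intro h
        rw [hι₀def] at h
        simp only [Prod.mk.injEq] at h
        exact hu (h.2.1.symm)
    · rw [hμ0def]
      simp only [Bool.true_eq_false, if_false]
      symm
      refine Finset.sum_eq_zero fun w _ => ?_
      rw [if_neg]
      intro h
      rw [hι₀def] at h
      simp only [Prod.mk.injEq] at h
      exact Bool.false_eq_true.mp h.1.2
  -- m0 is the U2-marginal of μ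
  have hm0 : ∀ w, m0 w = ∑ z, if ((z.1 : Q), z.2.2) = w then μ z else 0 := by
    intro w
    rw [hm0def, hμdef]
    exact (C_marg W pQ pX1c pU2c pX2c w).symm
  constructor
  · -- a' = lam * A + (1-lam) * At
    have hsplit : CMI μ' (fun z => z.2.2.1) (fun z => z.2.2.2.2.1) (fun z => (z.2.1, z.1))
        = CMI μ1 (fun z => z.2.2.1) (fun z => z.2.2.2.2.1) (fun z => (z.2.1, z.1))
          + CMI μ0 (fun z => z.2.2.1) (fun z => z.2.2.2.2.1) (fun z => (z.2.1, z.1)) := by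
      rw [hμsplit]
      exact CMI_add_split μ1 μ0 _ _ _ (fun ω => ω.1.2) (fun c => c.2.2) (fun ω => rfl)
        (fun ω h => by rw [hμ1def]; simp [h]) (fun ω h => by rw [hμ0def]; simp [h])
    have h1 : CMI μ1 (fun z => z.2.2.1) (fun z => z.2.2.2.2.1) (fun z => (z.2.1, z.1))
        = CMI (fun z => lam * μ z) (fun z : Q × U2 × A1 × A2 × B1 × B2 => z.2.2.1)
            (fun z => z.2.2.2.2.1) (fun z => (z.2.1, (z.1, true))) :=
      CMI_push _ ι₁ μ1 hν1 _ _ _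
    have h2 : CMI (fun z => lam * μ z) (fun z : Q × U2 × A1 × A2 × B1 × B2 => z.2.2.1)
          (fun z => z.2.2.2.2.1) (fun z => (z.2.1, (z.1, true)))
        = lam * CMI μ (fun z => z.2.2.1) (fun z => z.2.2.2.2.1)
            (fun z => (z.2.1, (z.1, true))) :=
      CMI_smul lam hlam0 μ _ _ _
    have h3 : CMI μ (fun z => z.2.2.1) (fun z => z.2.2.2.2.1)
          (fun z => (z.2.1, ((z.1 : Q), true)))
        = CMI μ (fun z => z.2.2.1) (fun z => z.2.2.2.2.1) (fun z => (z.2.1, z.1)) :=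
      CMI_congr μ _ _ _ _ _ _ (fun _ _ => Iff.rfl) (fun _ _ => Iff.rfl)
        (fun ω ω' => by simp only [Prod.mk.injEq]; tauto)
    have h4 : CMI μ0 (fun z => z.2.2.1) (fun z => z.2.2.2.2.1) (fun z => (z.2.1, z.1))
        = CMI (fun w => (1 - lam) * m0 w) (fun w : Q × A1 × A2 × B1 × B2 => w.2.1)
            (fun w => w.2.2.2.1) (fun w => (u0, (w.1, false))) :=
      CMI_push _ ι₀ μ0 hν0 _ _ _
    have h5 : CMI (fun w => (1 - lam) * m0 w) (fun w : Q × A1 × A2 × B1 × B2 => w.2.1)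
          (fun w => w.2.2.2.1) (fun w => (u0, (w.1, false)))
        = (1 - lam) * CMI m0 (fun w => w.2.1) (fun w => w.2.2.2.1)
            (fun w => (u0, (w.1, false))) :=
      CMI_smul (1 - lam) (by linarith) m0 _ _ _
    have h6 : CMI m0 (fun w => w.2.1) (fun w => w.2.2.2.1)
          (fun w => (u0, ((w.1 : Q), false)))
        = CMI m0 (fun w => w.2.1) (fun w => w.2.2.2.1) (fun w => w.1) :=
      CMI_congr m0 _ _ _ _ _ _ (fun _ _ => Iff.rfl) (fun _ _ => Iff.rfl)
        (fun ω ω' => by simp only [Prod.mk.injEq]; tauto)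
    have h7 : CMI m0 (fun w : Q × A1 × A2 × B1 × B2 => w.2.1) (fun w => w.2.2.2.1)
          (fun w => w.1)
        = CMI μ (fun z => z.2.2.1) (fun z => z.2.2.2.2.1) (fun z => z.1) :=
      CMI_push μ (fun z => (z.1, z.2.2)) m0 hm0 _ _ _
    rw [hsplit, h1, h2, h3, h4, h5, h6, h7]
  constructor
  · -- e' = lam * E
    have hsplit : CMI μ' (fun z => z.2.1) (fun z => z.2.2.2.2.1) (fun z => z.1)
        = CMI μ1 (fun z => z.2.1) (fun z => z.2.2.2.2.1) (fun z => z.1)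
          + CMI μ0 (fun z => z.2.1) (fun z => z.2.2.2.2.1) (fun z => z.1) := by
      rw [hμsplit]
      exact CMI_add_split μ1 μ0 _ _ _ (fun ω => ω.1.2) (fun c => c.2) (fun ω => rfl)
        (fun ω h => by rw [hμ1def]; simp [h]) (fun ω h => by rw [hμ0def]; simp [h])
    have h1 : CMI μ1 (fun z => z.2.1) (fun z => z.2.2.2.2.1) (fun z => z.1)
        = CMI (fun z => lam * μ z) (fun z : Q × U2 × A1 × A2 × B1 × B2 => z.2.1)
            (fun z => z.2.2.2.2.1) (fun z => ((z.1 : Q), true)) :=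
      CMI_push _ ι₁ μ1 hν1 _ _ _
    have h2 : CMI (fun z => lam * μ z) (fun z : Q × U2 × A1 × A2 × B1 × B2 => z.2.1)
          (fun z => z.2.2.2.2.1) (fun z => ((z.1 : Q), true))
        = lam * CMI μ (fun z => z.2.1) (fun z => z.2.2.2.2.1) (fun z => ((z.1 : Q), true)) :=
      CMI_smul lam hlam0 μ _ _ _
    have h3 : CMI μ (fun z => z.2.1) (fun z => z.2.2.2.2.1) (fun z => ((z.1 : Q), true))
        = CMI μ (fun z => z.2.1) (fun z => z.2.2.2.2.1) (fun z => z.1) :=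
      CMI_congr μ _ _ _ _ _ _ (fun _ _ => Iff.rfl) (fun _ _ => Iff.rfl)
        (fun ω ω' => by simp only [Prod.mk.injEq]; tauto)
    have h4 : CMI μ0 (fun z => z.2.1) (fun z => z.2.2.2.2.1) (fun z => z.1)
        = CMI (fun w => (1 - lam) * m0 w) (fun _ : Q × A1 × A2 × B1 × B2 => u0)
            (fun w => w.2.2.2.1) (fun w => ((w.1 : Q), false)) :=
      CMI_push _ ι₀ μ0 hν0 _ _ _
    have h5 : CMI (fun w => (1 - lam) * m0 w) (fun _ : Q × A1 × A2 × B1 × B2 => u0)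
          (fun w => w.2.2.2.1) (fun w => ((w.1 : Q), false)) = 0 :=
      CMI_const_left _ u0 _ _
    rw [hsplit, h1, h2, h3, h4, h5, add_zero]
  · -- d' = lam * D + (1-lam) * B
    have hsplit : CMI μ' (fun z => z.2.2.2.1) (fun z => z.2.2.2.2.2) (fun z => (z.2.1, z.1))
        = CMI μ1 (fun z => z.2.2.2.1) (fun z => z.2.2.2.2.2) (fun z => (z.2.1, z.1))
          + CMI μ0 (fun z => z.2.2.2.1) (fun z => z.2.2.2.2.2) (fun z => (z.2.1, z.1)) := by
      rw [hμsplit]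
      exact CMI_add_split μ1 μ0 _ _ _ (fun ω => ω.1.2) (fun c => c.2.2) (fun ω => rfl)
        (fun ω h => by rw [hμ1def]; simp [h]) (fun ω h => by rw [hμ0def]; simp [h])
    have h1 : CMI μ1 (fun z => z.2.2.2.1) (fun z => z.2.2.2.2.2) (fun z => (z.2.1, z.1))
        = CMI (fun z => lam * μ z) (fun z : Q × U2 × A1 × A2 × B1 × B2 => z.2.2.2.1)
            (fun z => z.2.2.2.2.2) (fun z => (z.2.1, ((z.1 : Q), true))) :=
      CMI_push _ ι₁ μ1 hν1 _ _ _
    have h2 : CMI (fun z => lam * μ z) (fun z : Q × U2 × A1 × A2 × B1 × B2 => z.2.2.2.1)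
          (fun z => z.2.2.2.2.2) (fun z => (z.2.1, ((z.1 : Q), true)))
        = lam * CMI μ (fun z => z.2.2.2.1) (fun z => z.2.2.2.2.2)
            (fun z => (z.2.1, ((z.1 : Q), true))) :=
      CMI_smul lam hlam0 μ _ _ _
    have h3 : CMI μ (fun z => z.2.2.2.1) (fun z => z.2.2.2.2.2)
          (fun z => (z.2.1, ((z.1 : Q), true)))
        = CMI μ (fun z => z.2.2.2.1) (fun z => z.2.2.2.2.2) (fun z => (z.2.1, z.1)) :=
      CMI_congr μ _ _ _ _ _ _ (fun _ _ => Iff.rfl) (fun _ _ => Iff.rfl)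
        (fun ω ω' => by simp only [Prod.mk.injEq]; tauto)
    have h4 : CMI μ0 (fun z => z.2.2.2.1) (fun z => z.2.2.2.2.2) (fun z => (z.2.1, z.1))
        = CMI (fun w => (1 - lam) * m0 w) (fun w : Q × A1 × A2 × B1 × B2 => w.2.2.1)
            (fun w => w.2.2.2.2) (fun w => (u0, ((w.1 : Q), false))) :=
      CMI_push _ ι₀ μ0 hν0 _ _ _
    have h5 : CMI (fun w => (1 - lam) * m0 w) (fun w : Q × A1 × A2 × B1 × B2 => w.2.2.1)
          (fun w => w.2.2.2.2) (fun w => (u0, ((w.1 : Q), false)))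
        = (1 - lam) * CMI m0 (fun w => w.2.2.1) (fun w => w.2.2.2.2)
            (fun w => (u0, ((w.1 : Q), false))) :=
      CMI_smul (1 - lam) (by linarith) m0 _ _ _
    have h6 : CMI m0 (fun w => w.2.2.1) (fun w => w.2.2.2.2)
          (fun w => (u0, ((w.1 : Q), false)))
        = CMI m0 (fun w => w.2.2.1) (fun w => w.2.2.2.2) (fun w => w.1) :=
      CMI_congr m0 _ _ _ _ _ _ (fun _ _ => Iff.rfl) (fun _ _ => Iff.rfl)
        (fun ω ω' => by simp only [Prod.mk.injEq]; tauto)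
    have h7 : CMI m0 (fun w : Q × A1 × A2 × B1 × B2 => w.2.2.1) (fun w => w.2.2.2.2)
          (fun w => w.1)
        = CMI μ (fun z => z.2.2.2.1) (fun z => z.2.2.2.2.2) (fun z => z.1) :=
      CMI_push μ (fun z => (z.1, z.2.2)) m0 hm0 _ _ _
    rw [hsplit, h1, h2, h3, h4, h5, h6, h7]

end Mix

/-- For a DMZIC with weak interference, the regions `C` and `E` coincide. -/
theorem regionC_eq_regionE {A1 A2 B1 B2 : Type} [Fintype A1] [DecidableEq A1] [Fintype A2] [DecidableEq A2]
    [Fintype B1] [DecidableEq B1] [Fintype B2] [DecidableEq B2]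
    (W : A1 → A2 → B1 × B2 → ℝ) (hW : IsChannel W) (hweak : WeakZ W) :
    regionC W = regionE W := by
  obtain ⟨p2, qq, hp2, hqq, hWf⟩ := hweak
  ext r
  simp only [regionC, regionE, Set.mem_setOf_eq]
  constructor
  · rintro ⟨Q, U2, iQF, iQD, iU2F, iU2D, pQ, pX1c, pU2c, pX2c, hpQ, hpX1, hpU2, hpX2,
      hr1, hr2, hA, hB, hS⟩
    obtain ⟨P1, key2, key3⟩ := key_facts W p2 qq pQ pX1c pU2c pX2c hW
      (fun x1 x2 y1 y2 => hWf x1 x2 y1 y2) hp2 hqq hpQ hpX1 hpU2 hpX2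
    set A := CMI (mu4 W pQ pX1c pU2c pX2c) (fun z => z.2.2.1) (fun z => z.2.2.2.2.1)
      (fun z => (z.2.1, z.1)) with hAdef
    set B := CMI (mu4 W pQ pX1c pU2c pX2c) (fun z => z.2.2.2.1) (fun z => z.2.2.2.2.2)
      (fun z => z.1) with hBdef
    set D := CMI (mu4 W pQ pX1c pU2c pX2c) (fun z => z.2.2.2.1) (fun z => z.2.2.2.2.2)
      (fun z => (z.2.1, z.1)) with hDdef
    set E := CMI (mu4 W pQ pX1c pU2c pX2c) (fun z => z.2.1) (fun z => z.2.2.2.2.1)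
      (fun z => z.1) with hEdef
    set At := CMI (mu4 W pQ pX1c pU2c pX2c) (fun z => z.2.2.1) (fun z => z.2.2.2.2.1)
      (fun z => z.1) with hAtdef
    rw [P1] at hS
    by_cases hcase : r.2 ≤ E + D
    · exact ⟨Q, U2, iQF, iQD, iU2F, iU2D, pQ, pX1c, pU2c, pX2c, hpQ, hpX1, hpU2, hpX2,
        hr1, hr2, hA, hcase⟩
    · push_neg at hcase
      have hEDB : E + D < B := lt_of_lt_of_le hcase hB
      have hden : 0 < B - (E + D) := by linarith
      set lam := (B - r.2) / (B - (E + D)) with hlamdef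
      have hlam0 : 0 ≤ lam := div_nonneg (by linarith) hden.le
      have hlam1 : lam ≤ 1 := by
        rw [hlamdef, div_le_one hden]
        linarith
      obtain ⟨q0⟩ := nonempty_of_isPMF pQ hpQ
      obtain ⟨u0⟩ := nonempty_of_isPMF (pU2c q0) (hpU2 q0)
      obtain ⟨hmQ, hmX1, hmU2, hmX2⟩ :=
        mix_pmf pQ pX1c pU2c pX2c lam u0 hpQ hpX1 hpU2 hpX2 hlam0 hlam1
      obtain ⟨ha', he', hd'⟩ := mix_facts pQ pX1c pU2c pX2c lam u0 W hlam0 hlam1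
      have hlmul : lam * (B - (E + D)) = B - r.2 := div_mul_cancel₀ _ hden.ne'
      refine ⟨Q × Bool, U2, inferInstance, inferInstance, iU2F, iU2D,
        mixQ pQ lam, mixX1 pX1c, mixU2 pU2c u0, mixX2 pU2c pX2c,
        hmQ, hmX1, hmU2, hmX2, hr1, hr2, ?_, ?_⟩
      · rw [ha']
        have hprod : 0 ≤ (1 - lam) * (At + B - (A + E + D)) :=
          mul_nonneg (by linarith) (by linarith)
        nlinarith [hprod, hS, hlmul, hA]
      · rw [he', hd']
        nlinarith [hlmul]
  · rintro ⟨Q, U2, iQF, iQD, iU2F, iU2D, pQ, pX1c, pU2c, pX2c, hpQ, hpX1, hpU2, hpX2,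
      hr1, hr2, hA, hBE⟩
    obtain ⟨P1, key2, key3⟩ := key_facts W p2 qq pQ pX1c pU2c pX2c hW
      (fun x1 x2 y1 y2 => hWf x1 x2 y1 y2) hp2 hqq hpQ hpX1 hpU2 hpX2
    refine ⟨Q, U2, iQF, iQD, iU2F, iU2D, pQ, pX1c, pU2c, pX2c, hpQ, hpX1, hpU2, hpX2,
      hr1, hr2, hA, ?_, ?_⟩
    · linarith
    · rw [P1]
      linarith

end IT
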